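/- (Lemma 4.9, error propagation for the last policy) For every realization of the samples and every k ∈ {1,…,K}: 0 ≤ V* − V^{π_k} ≤ 2H(α^k + A_{γ,k}/A_∞)·1 + (1/A_∞)·(𝒩^{π_k}π_k − 𝒩^{π*}π_*)E_k + (1/A_∞)·Σ_{j=1}^k γ^j (𝒩^{π*}π_* P_{k+1−j}^k − 𝒩^{π_k}π_k P_{k−j}^{k−1}) E'_{k+1−j}, where 𝒩^π := Σ_{t=0}^∞ (γπP)^t for any policy π and E'_{k+1−j} := ε_{k+1−j} − (1−α)E_{k−j} with E_0 := 0. -/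

import Mathlib

open MeasureTheory ProbabilityTheory Finset Real

noncomputable section

/-- The transition kernel `P` applied to a state-value function:
`(Pv)(x,a) = Σ_z P(z|x,a) v(z)`. -/
def mdpP {S A : Type} [Fintype S] (P : S → A → S → ℝ) (v : S → ℝ) : S → A → ℝ :=
  fun x a => ∑ z, P x a z * v z

/-- A policy applied to a Q-function: `(poq)(x) = Σ_a po(a|x) q(x,a)`. -/
def polAct {S A : Type} [Fintype A] (po : S → A → ℝ) (q : S → A → ℝ) : S → ℝ :=
  fun x => ∑ a, po x a * q x a

/-- `P` is a transition kernel. -/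
def IsKernel {S A : Type} [Fintype S] (P : S → A → S → ℝ) : Prop :=
  (∀ x a z, 0 ≤ P x a z) ∧ ∀ x a, ∑ z, P x a z = 1

/-- `po` is a (Markov) policy. -/
def IsPolicy {S A : Type} [Fintype A] (po : S → A → ℝ) : Prop :=
  (∀ x a, 0 ≤ po x a) ∧ ∀ x, ∑ a, po x a = 1

/-- The deterministic policy induced by `d : S → A`. -/
def detPol {S A : Type} [DecidableEq A] (d : S → A) : S → A → ℝ :=
  fun x a => if a = d x then 1 else 0

/-- The Bellman operator `T^po q = r + γ P (po q)`. -/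
def bellmanOp {S A : Type} [Fintype S] [Fintype A] (P : S → A → S → ℝ) (r : S → A → ℝ)
    (γ : ℝ) (po : S → A → ℝ) (qf : S → A → ℝ) : S → A → ℝ :=
  fun x a => r x a + γ * mdpP P (polAct po qf) x a

/-- `P^po = Ppo` acting on Q-functions. -/
def Ppi {S A : Type} [Fintype S] [Fintype A] (P : S → A → S → ℝ) (po : S → A → ℝ)
    (qf : S → A → ℝ) : S → A → ℝ :=
  mdpP P (polAct po qf)

/-- `PprodN P po j n` is `P^{po_{j+n-1}} ⋯ P^{po_j}` (`n` factors, identity for `n = 0`);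
this is `P_j^i` of the paper with `n = i + 1 - j` factors. -/
def PprodN {S A : Type} [Fintype S] [Fintype A] (P : S → A → S → ℝ)
    (po : ℕ → S → A → ℝ) (j : ℕ) : ℕ → (S → A → ℝ) → S → A → ℝ
  | 0, qf => qf
  | n + 1, qf => Ppi P (po (j + n)) (PprodN P po j n qf)

/-- The conditional standard deviation `σ(v)(x,a) = √(P(v²)(x,a) − (Pv)(x,a)²)`. -/
def sigmaP {S A : Type} [Fintype S] (P : S → A → S → ℝ) (v : S → ℝ) : S → A → ℝ :=
  fun x a => Real.sqrt (mdpP P (fun z => v z ^ 2) x a - (mdpP P v x a) ^ 2)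

/-- `𝒩^po = Σ_{t=0}^∞ (γ po P)^t` acting on state-value functions. -/
def Npol {S A : Type} [Fintype S] [Fintype A] (P : S → A → S → ℝ) (γ : ℝ)
    (po : S → A → ℝ) (vf : S → ℝ) : S → ℝ :=
  fun x => ∑' t : ℕ, ((fun uf : S → ℝ => fun z => γ * polAct po (mdpP P uf) z)^[t] vf) x

section MDVIAux

set_option linter.unusedSectionVars false

variable {S A : Type} [Fintype S] [Fintype A]

theorem detPol_isPolicy [DecidableEq A] (d : S → A) : IsPolicy (detPol d) := by
  refine ⟨fun x a => ?_, fun x => ?_⟩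
  · unfold detPol; split <;> norm_num
  · simp [detPol]

theorem polAct_detPol [DecidableEq A] (d : S → A) (q : S → A → ℝ) (x : S) :
    polAct (detPol d) q x = q x (d x) := by
  simp [polAct, detPol, ite_mul]

theorem polAct_mono {po : S → A → ℝ} (hpo : IsPolicy po) {q1 q2 : S → A → ℝ} {x : S}
    (h : ∀ a, q1 x a ≤ q2 x a) : polAct po q1 x ≤ polAct po q2 x :=
  Finset.sum_le_sum fun a _ => mul_le_mul_of_nonneg_left (h a) (hpo.1 x a)

theorem polAct_le {po : S → A → ℝ} (hpo : IsPolicy po) {q : S → A → ℝ} {x : S} {c : ℝ}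
    (h : ∀ a, q x a ≤ c) : polAct po q x ≤ c := by
  have h1 : polAct po q x ≤ ∑ a, po x a * c :=
    Finset.sum_le_sum fun a _ => mul_le_mul_of_nonneg_left (h a) (hpo.1 x a)
  calc polAct po q x ≤ ∑ a, po x a * c := h1
    _ = c := by rw [← Finset.sum_mul, hpo.2 x, one_mul]

theorem polAct_abs_le {po : S → A → ℝ} (hpo : IsPolicy po) {q : S → A → ℝ} {x : S} {c : ℝ}
    (h : ∀ a, |q x a| ≤ c) : |polAct po q x| ≤ c := by
  have h1 : |∑ a, po x a * q x a| ≤ ∑ a, |po x a * q x a| := Finset.abs_sum_le_sum_abs _ _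
  have h2 : ∀ a ∈ Finset.univ, |po x a * q x a| ≤ po x a * c := fun a _ => by
    rw [abs_mul, abs_of_nonneg (hpo.1 x a)]
    exact mul_le_mul_of_nonneg_left (h a) (hpo.1 x a)
  calc |polAct po q x| ≤ ∑ a, po x a * c := h1.trans (Finset.sum_le_sum h2)
    _ = c := by rw [← Finset.sum_mul, hpo.2 x, one_mul]

theorem polAct_comb (po : S → A → ℝ) (c1 c2 : ℝ) (q1 q2 : S → A → ℝ) (x : S) :
    polAct po (fun x' a' => c1 * q1 x' a' + c2 * q2 x' a') x
      = c1 * polAct po q1 x + c2 * polAct po q2 x := by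
  simp only [polAct, Finset.mul_sum, ← Finset.sum_add_distrib]
  exact Finset.sum_congr rfl fun a _ => by ring

theorem polAct_add (po : S → A → ℝ) (q1 q2 : S → A → ℝ) (x : S) :
    polAct po (fun x' a' => q1 x' a' + q2 x' a') x = polAct po q1 x + polAct po q2 x := by
  simp only [polAct, ← Finset.sum_add_distrib]
  exact Finset.sum_congr rfl fun a _ => by ring

theorem polAct_sub (po : S → A → ℝ) (q1 q2 : S → A → ℝ) (x : S) :
    polAct po (fun x' a' => q1 x' a' - q2 x' a') x = polAct po q1 x - polAct po q2 x := by
  simp only [polAct, ← Finset.sum_sub_distrib]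
  exact Finset.sum_congr rfl fun a _ => by ring

theorem polAct_smul (po : S → A → ℝ) (c : ℝ) (q : S → A → ℝ) (x : S) :
    polAct po (fun x' a' => c * q x' a') x = c * polAct po q x := by
  simp only [polAct, Finset.mul_sum]
  exact Finset.sum_congr rfl fun a _ => by ring

theorem polAct_sum {ι : Type*} (po : S → A → ℝ) (t : Finset ι) (f : ι → S → A → ℝ) (x : S) :
    polAct po (fun x' a' => ∑ i ∈ t, f i x' a') x = ∑ i ∈ t, polAct po (f i) x := by
  simp only [polAct, Finset.mul_sum]
  rw [Finset.sum_comm]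

theorem mdpP_mono {P : S → A → S → ℝ} (hP : IsKernel P) {v1 v2 : S → ℝ}
    (h : ∀ z, v1 z ≤ v2 z) (x : S) (a : A) : mdpP P v1 x a ≤ mdpP P v2 x a :=
  Finset.sum_le_sum fun z _ => mul_le_mul_of_nonneg_left (h z) (hP.1 x a z)

theorem mdpP_abs_le {P : S → A → S → ℝ} (hP : IsKernel P) {v : S → ℝ} {c : ℝ}
    (h : ∀ z, |v z| ≤ c) (x : S) (a : A) : |mdpP P v x a| ≤ c := by
  have h1 : |∑ z, P x a z * v z| ≤ ∑ z, |P x a z * v z| := Finset.abs_sum_le_sum_abs _ _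
  have h2 : ∀ z ∈ Finset.univ, |P x a z * v z| ≤ P x a z * c := fun z _ => by
    rw [abs_mul, abs_of_nonneg (hP.1 x a z)]
    exact mul_le_mul_of_nonneg_left (h z) (hP.1 x a z)
  calc |mdpP P v x a| ≤ ∑ z, P x a z * c := h1.trans (Finset.sum_le_sum h2)
    _ = c := by rw [← Finset.sum_mul, hP.2 x a, one_mul]

theorem mdpP_comb (P : S → A → S → ℝ) (c1 c2 : ℝ) (v1 v2 : S → ℝ) (x : S) (a : A) :
    mdpP P (fun z => c1 * v1 z + c2 * v2 z) x a = c1 * mdpP P v1 x a + c2 * mdpP P v2 x a := by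
  simp only [mdpP, Finset.mul_sum, ← Finset.sum_add_distrib]
  exact Finset.sum_congr rfl fun z _ => by ring

theorem mdpP_add (P : S → A → S → ℝ) (v1 v2 : S → ℝ) (x : S) (a : A) :
    mdpP P (fun z => v1 z + v2 z) x a = mdpP P v1 x a + mdpP P v2 x a := by
  simp only [mdpP, ← Finset.sum_add_distrib]
  exact Finset.sum_congr rfl fun z _ => by ring

theorem mdpP_sub (P : S → A → S → ℝ) (v1 v2 : S → ℝ) (x : S) (a : A) :
    mdpP P (fun z => v1 z - v2 z) x a = mdpP P v1 x a - mdpP P v2 x a := by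
  simp only [mdpP, ← Finset.sum_sub_distrib]
  exact Finset.sum_congr rfl fun z _ => by ring

theorem mdpP_smul (P : S → A → S → ℝ) (c : ℝ) (v : S → ℝ) (x : S) (a : A) :
    mdpP P (fun z => c * v z) x a = c * mdpP P v x a := by
  simp only [mdpP, Finset.mul_sum]
  exact Finset.sum_congr rfl fun z _ => by ring

theorem mdpP_sum {ι : Type*} (P : S → A → S → ℝ) (t : Finset ι) (f : ι → S → ℝ) (x : S) (a : A) :
    mdpP P (fun z => ∑ i ∈ t, f i z) x a = ∑ i ∈ t, mdpP P (f i) x a := by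
  simp only [mdpP, Finset.mul_sum]
  rw [Finset.sum_comm]

theorem Ppi_mono {P : S → A → S → ℝ} (hP : IsKernel P) {po : S → A → ℝ} (hpo : IsPolicy po)
    {q1 q2 : S → A → ℝ} (h : ∀ x a, q1 x a ≤ q2 x a) (x : S) (a : A) :
    Ppi P po q1 x a ≤ Ppi P po q2 x a :=
  mdpP_mono hP (fun z => polAct_mono hpo (h z)) x a

theorem Ppi_abs_le {P : S → A → S → ℝ} (hP : IsKernel P) {po : S → A → ℝ} (hpo : IsPolicy po)
    {q : S → A → ℝ} {c : ℝ} (h : ∀ x a, |q x a| ≤ c) (x : S) (a : A) :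
    |Ppi P po q x a| ≤ c :=
  mdpP_abs_le hP (fun z => polAct_abs_le hpo (h z)) x a

theorem Ppi_comb (P : S → A → S → ℝ) (po : S → A → ℝ) (c1 c2 : ℝ) (q1 q2 : S → A → ℝ) :
    Ppi P po (fun x' a' => c1 * q1 x' a' + c2 * q2 x' a')
      = fun x a => c1 * Ppi P po q1 x a + c2 * Ppi P po q2 x a := by
  funext x a
  show mdpP P (polAct po fun x' a' => c1 * q1 x' a' + c2 * q2 x' a') x a = _
  have h1 : (polAct po fun x' a' => c1 * q1 x' a' + c2 * q2 x' a')
      = fun z => c1 * polAct po q1 z + c2 * polAct po q2 z :=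
    funext fun z => polAct_comb po c1 c2 q1 q2 z
  rw [h1, mdpP_comb]
  rfl

theorem PprodN_comb (P : S → A → S → ℝ) (po : ℕ → S → A → ℝ) (s : ℕ) (c1 c2 : ℝ)
    (q1 q2 : S → A → ℝ) : ∀ n, PprodN P po s n (fun x' a' => c1 * q1 x' a' + c2 * q2 x' a')
      = fun x a => c1 * PprodN P po s n q1 x a + c2 * PprodN P po s n q2 x a := by
  intro n
  induction n with
  | zero => rfl
  | succ n ih =>
    show Ppi P (po (s + n)) _ = _
    rw [ih, Ppi_comb]
    rfl

theorem PprodN_abs_le {P : S → A → S → ℝ} (hP : IsKernel P) {po : ℕ → S → A → ℝ}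
    (hpo : ∀ i, IsPolicy (po i)) {q : S → A → ℝ} {c : ℝ} (h : ∀ x a, |q x a| ≤ c) (s : ℕ) :
    ∀ n x a, |PprodN P po s n q x a| ≤ c := by
  intro n
  induction n with
  | zero => exact h
  | succ n ih => exact fun x a => Ppi_abs_le hP (hpo (s + n)) ih x a

end MDVIAux
section MDVIAux2

set_option linter.unusedSectionVars false

variable {S A : Type} [Fintype S] [Fintype A]

/-- The one-step operator whose Neumann series is `Npol`. -/
def MopA (P : S → A → S → ℝ) (γ : ℝ) (po : S → A → ℝ) : (S → ℝ) → S → ℝ :=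
  fun uf z => γ * polAct po (mdpP P uf) z

theorem Npol_def (P : S → A → S → ℝ) (γ : ℝ) (po : S → A → ℝ) (vf : S → ℝ) (x : S) :
    Npol P γ po vf x = ∑' t : ℕ, (MopA P γ po)^[t] vf x := rfl

theorem MopA_comb (P : S → A → S → ℝ) (γ : ℝ) (po : S → A → ℝ) (c1 c2 : ℝ) (v1 v2 : S → ℝ) :
    MopA P γ po (fun z => c1 * v1 z + c2 * v2 z)
      = fun z => c1 * MopA P γ po v1 z + c2 * MopA P γ po v2 z := by
  funext z
  show γ * polAct po (mdpP P fun z' => c1 * v1 z' + c2 * v2 z') z = _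
  have h1 : (mdpP P fun z' => c1 * v1 z' + c2 * v2 z')
      = fun x a => c1 * mdpP P v1 x a + c2 * mdpP P v2 x a := by
    funext x a; exact mdpP_comb P c1 c2 v1 v2 x a
  rw [h1, polAct_comb]
  show γ * (c1 * polAct po (mdpP P v1) z + c2 * polAct po (mdpP P v2) z)
    = c1 * (γ * polAct po (mdpP P v1) z) + c2 * (γ * polAct po (mdpP P v2) z)
  ring

theorem MopA_iter_comb (P : S → A → S → ℝ) (γ : ℝ) (po : S → A → ℝ) (c1 c2 : ℝ)
    (v1 v2 : S → ℝ) : ∀ t, (MopA P γ po)^[t] (fun z => c1 * v1 z + c2 * v2 z)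
      = fun z => c1 * (MopA P γ po)^[t] v1 z + c2 * (MopA P γ po)^[t] v2 z := by
  intro t
  induction t with
  | zero => rfl
  | succ t ih =>
    calc (MopA P γ po)^[t+1] (fun z => c1 * v1 z + c2 * v2 z)
        = MopA P γ po ((MopA P γ po)^[t] (fun z => c1 * v1 z + c2 * v2 z)) :=
          Function.iterate_succ_apply' _ _ _
      _ = MopA P γ po (fun z => c1 * (MopA P γ po)^[t] v1 z + c2 * (MopA P γ po)^[t] v2 z) := by
          rw [ih]
      _ = fun z => c1 * MopA P γ po ((MopA P γ po)^[t] v1) z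
            + c2 * MopA P γ po ((MopA P γ po)^[t] v2) z := MopA_comb _ _ _ _ _ _ _
      _ = fun z => c1 * (MopA P γ po)^[t+1] v1 z + c2 * (MopA P γ po)^[t+1] v2 z := by
          funext z; rw [Function.iterate_succ_apply', Function.iterate_succ_apply']

theorem MopA_mono {P : S → A → S → ℝ} (hP : IsKernel P) {γ : ℝ} (hγ0 : 0 ≤ γ)
    {po : S → A → ℝ} (hpo : IsPolicy po) {v1 v2 : S → ℝ} (h : ∀ z, v1 z ≤ v2 z) :
    ∀ z, MopA P γ po v1 z ≤ MopA P γ po v2 z := fun z =>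
  mul_le_mul_of_nonneg_left (polAct_mono hpo (fun a => mdpP_mono hP h z a)) hγ0

theorem MopA_iter_mono {P : S → A → S → ℝ} (hP : IsKernel P) {γ : ℝ} (hγ0 : 0 ≤ γ)
    {po : S → A → ℝ} (hpo : IsPolicy po) {v1 v2 : S → ℝ} (h : ∀ z, v1 z ≤ v2 z) :
    ∀ t z, (MopA P γ po)^[t] v1 z ≤ (MopA P γ po)^[t] v2 z := by
  intro t
  induction t with
  | zero => exact h
  | succ t ih =>
    intro z
    rw [Function.iterate_succ_apply', Function.iterate_succ_apply']
    exact MopA_mono hP hγ0 hpo ih z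

theorem MopA_abs_le {P : S → A → S → ℝ} (hP : IsKernel P) {γ : ℝ} (hγ0 : 0 ≤ γ)
    {po : S → A → ℝ} (hpo : IsPolicy po) {v : S → ℝ} {c : ℝ} (h : ∀ z, |v z| ≤ c) :
    ∀ z, |MopA P γ po v z| ≤ γ * c := fun z => by
  show |γ * polAct po (mdpP P v) z| ≤ γ * c
  rw [abs_mul, abs_of_nonneg hγ0]
  exact mul_le_mul_of_nonneg_left (polAct_abs_le hpo (fun a => mdpP_abs_le hP h z a)) hγ0

theorem MopA_iter_abs_le {P : S → A → S → ℝ} (hP : IsKernel P) {γ : ℝ} (hγ0 : 0 ≤ γ)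
    {po : S → A → ℝ} (hpo : IsPolicy po) {v : S → ℝ} {c : ℝ} (h : ∀ z, |v z| ≤ c) :
    ∀ t z, |(MopA P γ po)^[t] v z| ≤ γ ^ t * c := by
  intro t
  induction t with
  | zero => simpa using h
  | succ t ih =>
    intro z
    rw [Function.iterate_succ_apply']
    calc |MopA P γ po ((MopA P γ po)^[t] v) z| ≤ γ * (γ ^ t * c) := MopA_abs_le hP hγ0 hpo ih z
      _ = γ ^ (t+1) * c := by rw [pow_succ]; ring

theorem abs_le_sum_abs (v : S → ℝ) (z : S) : |v z| ≤ ∑ z', |v z'| :=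
  Finset.single_le_sum (f := fun z' => |v z'|) (fun i _ => abs_nonneg _) (Finset.mem_univ z)

theorem MopA_summable {P : S → A → S → ℝ} (hP : IsKernel P) {γ : ℝ} (hγ0 : 0 ≤ γ)
    (hγ1 : γ < 1) {po : S → A → ℝ} (hpo : IsPolicy po) (v : S → ℝ) (x : S) :
    Summable fun t => (MopA P γ po)^[t] v x := by
  have hb : ∀ t, |(MopA P γ po)^[t] v x| ≤ (∑ z', |v z'|) * γ ^ t := fun t => by
    rw [mul_comm]
    exact MopA_iter_abs_le hP hγ0 hpo (abs_le_sum_abs v) t x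
  have hg : Summable fun t : ℕ => (∑ z', |v z'|) * γ ^ t :=
    (summable_geometric_of_lt_one hγ0 hγ1).mul_left _
  exact summable_abs_iff.mp (hg.of_nonneg_of_le (fun t => abs_nonneg _) hb)

theorem Npol_mono {P : S → A → S → ℝ} (hP : IsKernel P) {γ : ℝ} (hγ0 : 0 ≤ γ) (hγ1 : γ < 1)
    {po : S → A → ℝ} (hpo : IsPolicy po) {g1 g2 : S → ℝ} (h : ∀ z, g1 z ≤ g2 z) (x : S) :
    Npol P γ po g1 x ≤ Npol P γ po g2 x :=
  Summable.tsum_le_tsum (fun t => MopA_iter_mono hP hγ0 hpo h t x)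
    (MopA_summable hP hγ0 hγ1 hpo g1 x) (MopA_summable hP hγ0 hγ1 hpo g2 x)

theorem Npol_abs_le {P : S → A → S → ℝ} (hP : IsKernel P) {γ : ℝ} (hγ0 : 0 ≤ γ) (hγ1 : γ < 1)
    {po : S → A → ℝ} (hpo : IsPolicy po) {g : S → ℝ} {c : ℝ} (h : ∀ z, |g z| ≤ c) (x : S) :
    |Npol P γ po g x| ≤ c / (1 - γ) := by
  have hs := MopA_summable hP hγ0 hγ1 hpo g x
  have hg : Summable fun t : ℕ => c * γ ^ t :=
    (summable_geometric_of_lt_one hγ0 hγ1).mul_left _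
  have hgeom : ∑' t : ℕ, c * γ ^ t = c / (1 - γ) := by
    rw [tsum_mul_left, tsum_geometric_of_lt_one hγ0 hγ1, div_eq_mul_inv]
  rw [Npol_def, abs_le]
  constructor
  · have h1 : ∀ t, -(c * γ ^ t) ≤ (MopA P γ po)^[t] g x := fun t => by
      have h2 := (abs_le.mp (MopA_iter_abs_le hP hγ0 hpo h t x)).1
      nlinarith [h2]
    have := Summable.tsum_le_tsum h1 hg.neg hs
    rw [tsum_neg, hgeom] at this
    linarith
  · have h1 : ∀ t, (MopA P γ po)^[t] g x ≤ c * γ ^ t := fun t => by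
      have h2 := (abs_le.mp (MopA_iter_abs_le hP hγ0 hpo h t x)).2
      nlinarith [h2]
    have := Summable.tsum_le_tsum h1 hs hg
    rw [hgeom] at this
    linarith

theorem Npol_comb {P : S → A → S → ℝ} (hP : IsKernel P) {γ : ℝ} (hγ0 : 0 ≤ γ) (hγ1 : γ < 1)
    {po : S → A → ℝ} (hpo : IsPolicy po) (c1 c2 : ℝ) (v1 v2 : S → ℝ) (x : S) :
    Npol P γ po (fun z => c1 * v1 z + c2 * v2 z) x = c1 * Npol P γ po v1 x + c2 * Npol P γ po v2 x := by
  have hs1 := MopA_summable hP hγ0 hγ1 hpo v1 x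
  have hs2 := MopA_summable hP hγ0 hγ1 hpo v2 x
  rw [Npol_def, Npol_def, Npol_def]
  calc ∑' t : ℕ, (MopA P γ po)^[t] (fun z => c1 * v1 z + c2 * v2 z) x
      = ∑' t : ℕ, (c1 * (MopA P γ po)^[t] v1 x + c2 * (MopA P γ po)^[t] v2 x) :=
        tsum_congr fun t => by rw [MopA_iter_comb]
    _ = (∑' t : ℕ, c1 * (MopA P γ po)^[t] v1 x) + ∑' t : ℕ, c2 * (MopA P γ po)^[t] v2 x :=
        Summable.tsum_add (hs1.mul_left c1) (hs2.mul_left c2)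
    _ = c1 * (∑' t : ℕ, (MopA P γ po)^[t] v1 x) + c2 * ∑' t : ℕ, (MopA P γ po)^[t] v2 x := by
        rw [tsum_mul_left, tsum_mul_left]

theorem Npol_add {P : S → A → S → ℝ} (hP : IsKernel P) {γ : ℝ} (hγ0 : 0 ≤ γ) (hγ1 : γ < 1)
    {po : S → A → ℝ} (hpo : IsPolicy po) (v1 v2 : S → ℝ) (x : S) :
    Npol P γ po (fun z => v1 z + v2 z) x = Npol P γ po v1 x + Npol P γ po v2 x := by
  have h := Npol_comb hP hγ0 hγ1 hpo 1 1 v1 v2 x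
  simpa using h

theorem Npol_smul {P : S → A → S → ℝ} (hP : IsKernel P) {γ : ℝ} (hγ0 : 0 ≤ γ) (hγ1 : γ < 1)
    {po : S → A → ℝ} (hpo : IsPolicy po) (c : ℝ) (v : S → ℝ) (x : S) :
    Npol P γ po (fun z => c * v z) x = c * Npol P γ po v x := by
  have h := Npol_comb hP hγ0 hγ1 hpo c 0 v v x
  simpa using h

theorem Npol_zero {P : S → A → S → ℝ} (γ : ℝ) (po : S → A → ℝ) (x : S) :
    Npol P γ po (fun _ => (0:ℝ)) x = 0 := by
  have hfix : MopA P γ po (fun _ => (0:ℝ)) = fun _ => (0:ℝ) := by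
    funext z
    show γ * polAct po (mdpP P fun _ => (0:ℝ)) z = 0
    have : (mdpP P fun _ => (0:ℝ)) = fun _ _ => (0:ℝ) := by
      funext x' a'; simp [mdpP]
    rw [this]
    simp [polAct]
  rw [Npol_def]
  have : ∀ t : ℕ, (MopA P γ po)^[t] (fun _ => (0:ℝ)) x = 0 := fun t => by
    rw [Function.iterate_fixed hfix t]
  rw [tsum_congr this, tsum_zero]

theorem Npol_sum {P : S → A → S → ℝ} (hP : IsKernel P) {γ : ℝ} (hγ0 : 0 ≤ γ) (hγ1 : γ < 1)
    {po : S → A → ℝ} (hpo : IsPolicy po) {ι : Type*} (t : Finset ι) (f : ι → S → ℝ) (x : S) :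
    Npol P γ po (fun z => ∑ i ∈ t, f i z) x = ∑ i ∈ t, Npol P γ po (f i) x := by
  induction t using Finset.cons_induction with
  | empty => simpa using Npol_zero γ po x
  | cons a s ha ih =>
    simp only [Finset.sum_cons]
    rw [Npol_add hP hγ0 hγ1 hpo (f a) (fun z => ∑ i ∈ s, f i z) x, ih]

theorem Npol_fixed {P : S → A → S → ℝ} (hP : IsKernel P) {γ : ℝ} (hγ0 : 0 ≤ γ) (hγ1 : γ < 1)
    {po : S → A → ℝ} (hpo : IsPolicy po) (u g : S → ℝ)
    (hfix : ∀ z, u z = g z + MopA P γ po u z) (x : S) : Npol P γ po g x = u x := by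
  have hs := MopA_summable hP hγ0 hγ1 hpo g x
  have hu : u = fun z => 1 * g z + 1 * MopA P γ po u z := by
    funext z; rw [hfix z]; ring
  have hpart : ∀ n, ∑ t ∈ Finset.range n, (MopA P γ po)^[t] g x
      = u x - (MopA P γ po)^[n] u x := by
    intro n
    induction n with
    | zero => simp
    | succ n ih =>
      rw [Finset.sum_range_succ, ih]
      have h1 : (MopA P γ po)^[n] u = fun z => 1 * (MopA P γ po)^[n] g z
          + 1 * (MopA P γ po)^[n] (MopA P γ po u) z := by
        conv_lhs => rw [hu]
        exact MopA_iter_comb P γ po 1 1 g (MopA P γ po u) n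
      have h2 : (MopA P γ po)^[n] (MopA P γ po u) x = (MopA P γ po)^[n+1] u x := by
        rw [Function.iterate_succ_apply]
      have h3 := congrFun h1 x
      rw [h2] at h3
      simp only [one_mul] at h3
      linarith
  have hlim1 : Filter.Tendsto (fun n => ∑ t ∈ Finset.range n, (MopA P γ po)^[t] g x)
      Filter.atTop (nhds (Npol P γ po g x)) := hs.hasSum.tendsto_sum_nat
  have hb : ∀ n, ‖(MopA P γ po)^[n] u x‖ ≤ (∑ z', |u z'|) * γ ^ n := fun n => by
    rw [Real.norm_eq_abs, mul_comm]
    exact MopA_iter_abs_le hP hγ0 hpo (abs_le_sum_abs u) n x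
  have hg0 : Filter.Tendsto (fun n : ℕ => (∑ z', |u z'|) * γ ^ n) Filter.atTop (nhds 0) := by
    simpa using (tendsto_pow_atTop_nhds_zero_of_lt_one hγ0 hγ1).const_mul (∑ z', |u z'|)
  have hlim0 : Filter.Tendsto (fun n => (MopA P γ po)^[n] u x) Filter.atTop (nhds 0) :=
    squeeze_zero_norm hb hg0
  have hlim2 : Filter.Tendsto (fun n => ∑ t ∈ Finset.range n, (MopA P γ po)^[t] g x)
      Filter.atTop (nhds (u x)) := by
    have := (tendsto_const_nhds (x := u x) (f := Filter.atTop (α := ℕ))).sub hlim0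
    rw [sub_zero] at this
    exact this.congr fun n => (hpart n).symm
  exact tendsto_nhds_unique hlim1 hlim2

theorem Npol_bellman {P : S → A → S → ℝ} (hP : IsKernel P) (r : S → A → ℝ) {γ : ℝ}
    (hγ0 : 0 ≤ γ) (hγ1 : γ < 1) {po : S → A → ℝ} (hpo : IsPolicy po) (Q : S → A → ℝ)
    (hQ : bellmanOp P r γ po Q = Q) (q : S → A → ℝ) (x : S) :
    polAct po Q x - polAct po q x
      = Npol P γ po (fun z => polAct po (fun x' a' => bellmanOp P r γ po q x' a' - q x' a') z) x := by
  refine (Npol_fixed hP hγ0 hγ1 hpo (fun z => polAct po Q z - polAct po q z) _ ?_ x).symm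
  intro z
  have e2 : ∀ qq : S → A → ℝ, polAct po (bellmanOp P r γ po qq) z
      = polAct po r z + γ * polAct po (mdpP P (polAct po qq)) z := by
    intro qq
    have h0 : bellmanOp P r γ po qq
        = fun x' a' => r x' a' + γ * mdpP P (polAct po qq) x' a' := rfl
    rw [h0, polAct_add po r (fun x' a' => γ * mdpP P (polAct po qq) x' a') z,
      polAct_smul po γ (mdpP P (polAct po qq)) z]
  have e1 : polAct po (fun x' a' => bellmanOp P r γ po q x' a' - q x' a') z
      = polAct po r z + γ * polAct po (mdpP P (polAct po q)) z - polAct po q z := by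
    rw [polAct_sub po (bellmanOp P r γ po q) q z, e2 q]
  have e3 : MopA P γ po (fun z' => polAct po Q z' - polAct po q z') z
      = γ * (polAct po (mdpP P (polAct po Q)) z - polAct po (mdpP P (polAct po q)) z) := by
    show γ * polAct po (mdpP P fun z' => polAct po Q z' - polAct po q z') z = _
    have h4 : (mdpP P fun z' => polAct po Q z' - polAct po q z')
        = fun x' a' => mdpP P (polAct po Q) x' a' - mdpP P (polAct po q) x' a' := by
      funext x' a'; exact mdpP_sub P (polAct po Q) (polAct po q) x' a'
    rw [h4, polAct_sub]
  have e5 : polAct po Q z = polAct po r z + γ * polAct po (mdpP P (polAct po Q)) z := by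
    conv_lhs => rw [← hQ]
    exact e2 Q
  rw [e1, e3]
  linear_combination e5
end MDVIAux2
theorem sum_Icc_one_eq_sum_range (f : ℕ → ℝ) (k : ℕ) :
    ∑ i ∈ Finset.Icc 1 k, f i = ∑ i ∈ Finset.range k, f (i + 1) := by
  induction k with
  | zero => simp
  | succ k ih => rw [Finset.sum_Icc_succ_top (by omega), ih, Finset.sum_range_succ]

set_option maxHeartbeats 1000000 in
/-- Lemma 4.9: error propagation for the last MDVI policy. -/
theorem mdvi_error_propagation_last_policy
    (α : ℝ) (hα0 : 0 ≤ α) (hα1 : α < 1)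
    (S A : Type) [Fintype S] [Fintype A] [Nonempty S] [Nonempty A] [DecidableEq A]
    (P : S → A → S → ℝ) (hP : IsKernel P)
    (r : S → A → ℝ) (hr : ∀ x a, |r x a| ≤ 1)
    (γ H : ℝ) (hγ0 : 0 ≤ γ) (hγ1 : γ < 1) (hH : H = 1 / (1 - γ))
    (Qpol : (S → A → ℝ) → S → A → ℝ)
    (hQ : ∀ po, IsPolicy po → bellmanOp P r γ po (Qpol po) = Qpol po)
    (pstar : S → A → ℝ) (hpstar : IsPolicy pstar)
    (hopt : ∀ po, IsPolicy po → ∀ x, polAct po (Qpol po) x ≤ polAct pstar (Qpol pstar) x)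
    (K M : ℕ) (hM : 1 ≤ M)
    (y : ℕ → ℕ → S → A → S)
    (w v : ℕ → S → ℝ) (sq qv : ℕ → S → A → ℝ)
    (hs0 : ∀ x a, sq 0 x a = 0) (hw0 : ∀ x, w 0 x = 0)
    (hv : ∀ k x, v k x = w k x - α * w (k - 1) x)
    (hqv : ∀ k x a, qv (k + 1) x a
      = r x a + (γ / (M : ℝ)) * ∑ m ∈ Finset.range M, v k (y k m x a))
    (hsq : ∀ k x a, sq (k + 1) x a = qv (k + 1) x a + α * sq k x a)
    (hwk : ∀ k x, w (k + 1) x = ⨆ a, sq (k + 1) x a)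
    (pol : ℕ → S → A)
    (hgreedy : ∀ k x a, sq k x a ≤ sq k x (pol k x))
    (εf Ef : ℕ → S → A → ℝ)
    (hεf : ∀ k x a, εf (k + 1) x a
      = (γ / (M : ℝ)) * ∑ m ∈ Finset.range M, v k (y k m x a) - γ * mdpP P (v k) x a)
    (hEf : ∀ k x a, Ef k x a = ∑ j ∈ Finset.range k, α ^ (k - 1 - j) * εf (j + 1) x a)
    :
    ∀ k ∈ Finset.Icc 1 K, ∀ x,
      0 ≤ polAct pstar (Qpol pstar) x
            - polAct (detPol (pol k)) (Qpol (detPol (pol k))) x ∧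
      polAct pstar (Qpol pstar) x - polAct (detPol (pol k)) (Qpol (detPol (pol k))) x ≤
        2 * H * (α ^ k +
            (∑ j ∈ Finset.range k, γ ^ (k - j) * α ^ j) / ((1 : ℝ) / (1 - α)))
        + (1 / ((1 : ℝ) / (1 - α))) *
            (Npol P γ (detPol (pol k)) (polAct (detPol (pol k)) (Ef k)) x
              - Npol P γ pstar (polAct pstar (Ef k)) x)
        + (1 / ((1 : ℝ) / (1 - α))) * ∑ j ∈ Finset.Icc 1 k, γ ^ j *
            (Npol P γ pstar (polAct pstar
                (PprodN P (fun i => detPol (pol i)) (k + 1 - j) j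
                  (fun x' a' => εf (k + 1 - j) x' a' - (1 - α) * Ef (k - j) x' a'))) x
              - Npol P γ (detPol (pol k)) (polAct (detPol (pol k))
                (PprodN P (fun i => detPol (pol i)) (k - j) j
                  (fun x' a' => εf (k + 1 - j) x' a' - (1 - α) * Ef (k - j) x' a'))) x) := by
  intro k hk x0
  obtain ⟨hk1, -⟩ := Finset.mem_Icc.mp hk
  have h1α : (0:ℝ) < 1 - α := by linarith
  have h1γ : (0:ℝ) < 1 - γ := by linarith
  have hπpol : ∀ i, IsPolicy (detPol (pol i)) := fun i => detPol_isPolicy (pol i)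
  constructor
  · have := hopt (detPol (pol k)) (hπpol k) x0
    linarith
  obtain ⟨n, rfl⟩ : ∃ n, k = n + 1 := ⟨k - 1, (Nat.succ_pred_eq_of_pos hk1).symm⟩
  clear hk hk1
  -- basic facts
  have hE0 : ∀ x a, Ef 0 x a = 0 := by intro x a; rw [hEf]; simp
  have hErec : ∀ m x a, Ef (m + 1) x a = εf (m + 1) x a + α * Ef m x a := by
    intro m x a
    rw [hEf (m+1) x a, hEf m x a, Finset.sum_range_succ, Finset.mul_sum]
    have h1 : ∀ j ∈ Finset.range m, α ^ (m + 1 - 1 - j) * εf (j + 1) x a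
        = α * (α ^ (m - 1 - j) * εf (j + 1) x a) := by
      intro j hj
      have hj' := Finset.mem_range.mp hj
      rw [show m + 1 - 1 - j = (m - 1 - j) + 1 by omega, pow_succ]
      ring
    rw [Finset.sum_congr rfl h1]
    simp [add_comm]
  have hv0 : ∀ z, v 0 z = 0 := by
    intro z
    have h := hv 0 z
    simpa [hw0] using h
  have hW : ∀ m x, w m x = sq m x (pol m x) := by
    intro m x
    cases m with
    | zero => rw [hw0, hs0]
    | succ m =>
      rw [hwk]
      exact le_antisymm (ciSup_le fun a => hgreedy (m+1) x a)
        (le_ciSup (Finite.bddAbove_range _) (pol (m+1) x))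
  have hmw0 : ∀ x a, mdpP P (w 0) x a = 0 := by
    intro x a
    exact Finset.sum_eq_zero fun z _ => by rw [hw0 z, mul_zero]
  have hA : ∀ m x a, sq (m + 1) x a
      = (∑ j ∈ Finset.range (m + 1), α ^ j) * r x a + γ * mdpP P (w m) x a + Ef (m + 1) x a := by
    intro m
    induction m with
    | zero =>
      intro x a
      have hq1 : qv 1 x a = r x a + (εf 1 x a + γ * mdpP P (v 0) x a) := by
        have h1 := hqv 0 x a
        have h2 := hεf 0 x a
        rw [h1]; linarith
      have hm0 : mdpP P (v 0) x a = 0 :=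
        Finset.sum_eq_zero fun z _ => by rw [hv0 z, mul_zero]
      rw [hsq 0 x a, hs0, hq1, hm0, hmw0 x a, hErec 0 x a, hE0]
      simp
    | succ m ih =>
      intro x a
      have hq : qv (m + 2) x a = r x a + (εf (m + 2) x a + γ * mdpP P (v (m + 1)) x a) := by
        have h1 := hqv (m+1) x a
        have h2 := hεf (m+1) x a
        rw [h1]; linarith
      have hvm : v (m + 1) = fun z => w (m + 1) z - α * w m z := by
        funext z
        have h := hv (m+1) z
        simpa using h
      have hmv : mdpP P (v (m + 1)) x a = mdpP P (w (m + 1)) x a - α * mdpP P (w m) x a := by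
        rw [hvm, mdpP_sub P (w (m+1)) (fun z => α * w m z) x a, mdpP_smul P α (w m) x a]
      have hgeo : (∑ j ∈ Finset.range (m + 2), α ^ j)
          = 1 + α * ∑ j ∈ Finset.range (m + 1), α ^ j := by
        rw [Finset.sum_range_succ' (fun j => α ^ j) (m+1), Finset.mul_sum]
        simp only [pow_succ, pow_zero]
        rw [add_comm]
        congr 1
        exact Finset.sum_congr rfl fun j _ => by ring
      rw [hsq (m+1) x a, hq, ih x a, hmv, hErec (m+1) x a, hgeo]
      ring
  -- push lemma: composing with one more transition operator
  have hpush : ∀ (c L : ℕ), L ≤ c + 1 → ∀ (F : ℕ → S → A → ℝ) (x : S) (a : A),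
      γ * mdpP P (fun z => polAct (detPol (pol c))
          (fun x' a' => ∑ j ∈ Finset.range L,
            γ ^ j * PprodN P (fun i => detPol (pol i)) (c - j) j (F j) x' a') z) x a
      = ∑ j ∈ Finset.range L,
          γ ^ (j + 1) * PprodN P (fun i => detPol (pol i)) (c - j) (j + 1) (F j) x a := by
    intro c L hL F x a
    have h1 : (fun z => polAct (detPol (pol c))
        (fun x' a' => ∑ j ∈ Finset.range L,
          γ ^ j * PprodN P (fun i => detPol (pol i)) (c - j) j (F j) x' a') z)
        = fun z => ∑ j ∈ Finset.range L, γ ^ j *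
            polAct (detPol (pol c)) (PprodN P (fun i => detPol (pol i)) (c - j) j (F j)) z := by
      funext z
      rw [polAct_sum (detPol (pol c)) (Finset.range L)
        (fun j => fun x' a' => γ ^ j * PprodN P (fun i => detPol (pol i)) (c - j) j (F j) x' a') z]
      exact Finset.sum_congr rfl fun j _ =>
        polAct_smul (detPol (pol c)) (γ ^ j) (PprodN P (fun i => detPol (pol i)) (c - j) j (F j)) z
    rw [h1, mdpP_sum P (Finset.range L)
      (fun j => fun z => γ ^ j *
        polAct (detPol (pol c)) (PprodN P (fun i => detPol (pol i)) (c - j) j (F j)) z) x a,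
      Finset.mul_sum]
    refine Finset.sum_congr rfl fun j hj => ?_
    have hjc : c - j + j = c := by
      have := Finset.mem_range.mp hj; omega
    have h2 : mdpP P (fun z => γ ^ j *
        polAct (detPol (pol c)) (PprodN P (fun i => detPol (pol i)) (c - j) j (F j)) z) x a
        = γ ^ j * mdpP P
          (polAct (detPol (pol c)) (PprodN P (fun i => detPol (pol i)) (c - j) j (F j))) x a :=
      mdpP_smul P (γ ^ j) _ x a
    have h3 : PprodN P (fun i => detPol (pol i)) (c - j) (j + 1) (F j)
        = Ppi P (detPol (pol c)) (PprodN P (fun i => detPol (pol i)) (c - j) j (F j)) := by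
      show Ppi P ((fun i => detPol (pol i)) (c - j + j)) _ = _
      rw [hjc]
    rw [h2, h3]
    show γ * (γ ^ j * Ppi P (detPol (pol c)) (PprodN P (fun i => detPol (pol i)) (c - j) j (F j)) x a) = _
    rw [pow_succ]
    ring
  -- upper bound on the increment of (1-α)·s
  have hDup : ∀ m x a, (1 - α) * sq (m + 1) x a - (1 - α) * sq m x a
      ≤ ∑ j ∈ Finset.range (m + 1), γ ^ j * PprodN P (fun i => detPol (pol i)) (m + 1 - j) j
          (fun x' a' => ((1 - α) * α ^ (m - j)) * r x' a'
            + (1 - α) * (εf (m + 1 - j) x' a' - (1 - α) * Ef (m - j) x' a')) x a := by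
    intro m
    induction m with
    | zero =>
      intro x a
      apply le_of_eq
      have h1 := hA 0 x a
      rw [hs0, h1, hmw0 x a, hErec 0 x a, hE0 x a]
      rw [show (0:ℕ) + 1 = 1 from rfl]
      rw [Finset.sum_range_one, Finset.sum_range_one]
      have h5 : ∀ q : S → A → ℝ, PprodN P (fun i => detPol (pol i)) (1 - 0) 0 q x a = q x a :=
        fun q => rfl
      rw [h5]
      simp only [pow_zero, Nat.sub_zero, Nat.sub_self, hE0 x a]
      ring
    | succ m ih =>
      intro x a
      have heq : (1 - α) * sq (m + 2) x a - (1 - α) * sq (m + 1) x a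
          = (((1 - α) * α ^ (m + 1)) * r x a
              + (1 - α) * (εf (m + 2) x a - (1 - α) * Ef (m + 1) x a))
            + γ * mdpP P (fun z => (1 - α) * w (m + 1) z - (1 - α) * w m z) x a := by
        have h1 := hA (m+1) x a
        have h2 := hA m x a
        have h3 : mdpP P (fun z => (1 - α) * w (m + 1) z - (1 - α) * w m z) x a
            = (1 - α) * mdpP P (w (m + 1)) x a - (1 - α) * mdpP P (w m) x a := by
          rw [mdpP_sub P (fun z => (1 - α) * w (m+1) z) (fun z => (1 - α) * w m z) x a,
            mdpP_smul P (1 - α) (w (m+1)) x a, mdpP_smul P (1 - α) (w m) x a]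
        have h4 := hErec (m+1) x a
        have h5 : (∑ j ∈ Finset.range (m + 2), α ^ j)
            = α ^ (m + 1) + ∑ j ∈ Finset.range (m + 1), α ^ j := by
          rw [Finset.sum_range_succ]; ring
        rw [h1, h2, h3, h4, h5]
        ring
      have hin : ∀ z, (1 - α) * w (m + 1) z - (1 - α) * w m z
          ≤ polAct (detPol (pol (m + 1)))
              (fun x' a' => (1 - α) * sq (m + 1) x' a' - (1 - α) * sq m x' a') z := by
        intro z
        rw [polAct_detPol]
        have h1 := hW (m+1) z
        have h2 : (1 - α) * sq m z (pol (m+1) z) ≤ (1 - α) * w m z := by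
          rw [hW m z]
          exact mul_le_mul_of_nonneg_left (hgreedy m z _) h1α.le
        rw [h1]
        linarith
      have hin2 : ∀ z, polAct (detPol (pol (m + 1)))
            (fun x' a' => (1 - α) * sq (m + 1) x' a' - (1 - α) * sq m x' a') z
          ≤ polAct (detPol (pol (m + 1)))
            (fun x' a' => ∑ j ∈ Finset.range (m + 1),
              γ ^ j * PprodN P (fun i => detPol (pol i)) (m + 1 - j) j
                (fun x'' a'' => ((1 - α) * α ^ (m - j)) * r x'' a''
                  + (1 - α) * (εf (m + 1 - j) x'' a'' - (1 - α) * Ef (m - j) x'' a'')) x' a') z :=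
        fun z => polAct_mono (hπpol (m+1)) (fun a' => ih z a')
      have hmono : γ * mdpP P (fun z => (1 - α) * w (m + 1) z - (1 - α) * w m z) x a
          ≤ γ * mdpP P (fun z => polAct (detPol (pol (m + 1)))
              (fun x' a' => ∑ j ∈ Finset.range (m + 1),
                γ ^ j * PprodN P (fun i => detPol (pol i)) (m + 1 - j) j
                  (fun x'' a'' => ((1 - α) * α ^ (m - j)) * r x'' a''
                    + (1 - α) * (εf (m + 1 - j) x'' a'' - (1 - α) * Ef (m - j) x'' a'')) x' a') z) x a := by
        refine mul_le_mul_of_nonneg_left (mdpP_mono hP (fun z => le_trans (hin z) (hin2 z)) x a) hγ0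
      have hps := hpush (m+1) (m+1) (by omega)
        (fun j => fun x'' a'' => ((1 - α) * α ^ (m - j)) * r x'' a''
          + (1 - α) * (εf (m + 1 - j) x'' a'' - (1 - α) * Ef (m - j) x'' a'')) x a
      rw [hps] at hmono
      have hresum : ∑ j ∈ Finset.range (m + 2),
          γ ^ j * PprodN P (fun i => detPol (pol i)) (m + 2 - j) j
            (fun x' a' => ((1 - α) * α ^ (m + 1 - j)) * r x' a'
              + (1 - α) * (εf (m + 2 - j) x' a' - (1 - α) * Ef (m + 1 - j) x' a')) x a
          = (((1 - α) * α ^ (m + 1)) * r x a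
              + (1 - α) * (εf (m + 2) x a - (1 - α) * Ef (m + 1) x a))
            + ∑ j ∈ Finset.range (m + 1),
              γ ^ (j + 1) * PprodN P (fun i => detPol (pol i)) (m + 1 - j) (j + 1)
                (fun x'' a'' => ((1 - α) * α ^ (m - j)) * r x'' a''
                  + (1 - α) * (εf (m + 1 - j) x'' a'' - (1 - α) * Ef (m - j) x'' a'')) x a := by
        rw [Finset.sum_range_succ' (fun j =>
          γ ^ j * PprodN P (fun i => detPol (pol i)) (m + 2 - j) j
            (fun x' a' => ((1 - α) * α ^ (m + 1 - j)) * r x' a'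
              + (1 - α) * (εf (m + 2 - j) x' a' - (1 - α) * Ef (m + 1 - j) x' a')) x a) (m+1)]
        rw [add_comm]
        congr 1
        · show γ ^ 0 * PprodN P (fun i => detPol (pol i)) (m + 2 - 0) 0
            (fun x' a' => ((1 - α) * α ^ (m + 1 - 0)) * r x' a'
              + (1 - α) * (εf (m + 2 - 0) x' a' - (1 - α) * Ef (m + 1 - 0) x' a')) x a = _
          norm_num [PprodN]
        · refine Finset.sum_congr rfl fun j hj => ?_
          have e1 : m + 2 - (j + 1) = m + 1 - j := by omega
          have e2 : m + 1 - (j + 1) = m - j := by omega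
          rw [e1, e2]
      rw [hresum]
      linarith [hmono, heq.le]

  -- hDlo : lower bound on the increment
  have hDlo : ∀ m x a,
      (∑ j ∈ Finset.range (m + 1), γ ^ j * PprodN P (fun i => detPol (pol i)) (m - j) j
          (fun x' a' => ((1 - α) * α ^ (m - j)) * r x' a'
            + (1 - α) * (εf (m + 1 - j) x' a' - (1 - α) * Ef (m - j) x' a')) x a)
      ≤ (1 - α) * sq (m + 1) x a - (1 - α) * sq m x a := by
    intro m
    induction m with
    | zero =>
      intro x a
      apply le_of_eq
      have h1 := hA 0 x a
      rw [hs0, h1, hmw0 x a, hErec 0 x a, hE0 x a]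
      rw [show (0:ℕ) + 1 = 1 from rfl]
      rw [Finset.sum_range_one, Finset.sum_range_one]
      have h5 : ∀ q : S → A → ℝ, PprodN P (fun i => detPol (pol i)) (0 - 0) 0 q x a = q x a :=
        fun q => rfl
      rw [h5]
      simp only [pow_zero, Nat.sub_zero, Nat.sub_self, hE0 x a]
      ring
    | succ m ih =>
      intro x a
      have heq : (1 - α) * sq (m + 2) x a - (1 - α) * sq (m + 1) x a
          = (((1 - α) * α ^ (m + 1)) * r x a
              + (1 - α) * (εf (m + 2) x a - (1 - α) * Ef (m + 1) x a))
            + γ * mdpP P (fun z => (1 - α) * w (m + 1) z - (1 - α) * w m z) x a := by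
        have h1 := hA (m+1) x a
        have h2 := hA m x a
        have h3 : mdpP P (fun z => (1 - α) * w (m + 1) z - (1 - α) * w m z) x a
            = (1 - α) * mdpP P (w (m + 1)) x a - (1 - α) * mdpP P (w m) x a := by
          rw [mdpP_sub P (fun z => (1 - α) * w (m+1) z) (fun z => (1 - α) * w m z) x a,
            mdpP_smul P (1 - α) (w (m+1)) x a, mdpP_smul P (1 - α) (w m) x a]
        have h4 := hErec (m+1) x a
        have h5 : (∑ j ∈ Finset.range (m + 2), α ^ j)
            = α ^ (m + 1) + ∑ j ∈ Finset.range (m + 1), α ^ j := by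
          rw [Finset.sum_range_succ]; ring
        rw [h1, h2, h3, h4, h5]
        ring
      have hin : ∀ z, polAct (detPol (pol m))
            (fun x' a' => (1 - α) * sq (m + 1) x' a' - (1 - α) * sq m x' a') z
          ≤ (1 - α) * w (m + 1) z - (1 - α) * w m z := by
        intro z
        rw [polAct_detPol]
        have h1 : (1 - α) * sq (m + 1) z (pol m z) ≤ (1 - α) * sq (m + 1) z (pol (m + 1) z) :=
          mul_le_mul_of_nonneg_left (hgreedy (m+1) z _) h1α.le
        rw [hW m z, hW (m+1) z]
        linarith
      have hin2 : ∀ z, polAct (detPol (pol m))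
            (fun x' a' => ∑ j ∈ Finset.range (m + 1),
              γ ^ j * PprodN P (fun i => detPol (pol i)) (m - j) j (fun x'' a'' => ((1 - α) * α ^ (m - j)) * r x'' a'' + (1 - α) * (εf (m + 1 - j) x'' a'' - (1 - α) * Ef (m - j) x'' a'')) x' a') z
          ≤ polAct (detPol (pol m))
            (fun x' a' => (1 - α) * sq (m + 1) x' a' - (1 - α) * sq m x' a') z :=
        fun z => polAct_mono (hπpol m) (fun a' => ih z a')
      have hmono : γ * mdpP P (fun z => polAct (detPol (pol m))
            (fun x' a' => ∑ j ∈ Finset.range (m + 1),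
              γ ^ j * PprodN P (fun i => detPol (pol i)) (m - j) j (fun x'' a'' => ((1 - α) * α ^ (m - j)) * r x'' a'' + (1 - α) * (εf (m + 1 - j) x'' a'' - (1 - α) * Ef (m - j) x'' a'')) x' a') z) x a
          ≤ γ * mdpP P (fun z => (1 - α) * w (m + 1) z - (1 - α) * w m z) x a :=
        mul_le_mul_of_nonneg_left (mdpP_mono hP (fun z => le_trans (hin2 z) (hin z)) x a) hγ0
      have hps := hpush m (m+1) (by omega)
        (fun j => (fun x'' a'' => ((1 - α) * α ^ (m - j)) * r x'' a'' + (1 - α) * (εf (m + 1 - j) x'' a'' - (1 - α) * Ef (m - j) x'' a''))) x a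
      rw [hps] at hmono
      have hresum : ∑ j ∈ Finset.range (m + 2),
          γ ^ j * PprodN P (fun i => detPol (pol i)) (m + 1 - j) j
            (fun x' a' => ((1 - α) * α ^ (m + 1 - j)) * r x' a'
              + (1 - α) * (εf (m + 2 - j) x' a' - (1 - α) * Ef (m + 1 - j) x' a')) x a
          = (((1 - α) * α ^ (m + 1)) * r x a
              + (1 - α) * (εf (m + 2) x a - (1 - α) * Ef (m + 1) x a))
            + ∑ j ∈ Finset.range (m + 1),
              γ ^ (j + 1) * PprodN P (fun i => detPol (pol i)) (m - j) (j + 1) (fun x'' a'' => ((1 - α) * α ^ (m - j)) * r x'' a'' + (1 - α) * (εf (m + 1 - j) x'' a'' - (1 - α) * Ef (m - j) x'' a'')) x a := by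
        rw [Finset.sum_range_succ' (fun j =>
          γ ^ j * PprodN P (fun i => detPol (pol i)) (m + 1 - j) j
            (fun x' a' => ((1 - α) * α ^ (m + 1 - j)) * r x' a'
              + (1 - α) * (εf (m + 2 - j) x' a' - (1 - α) * Ef (m + 1 - j) x' a')) x a) (m+1)]
        rw [add_comm]
        congr 1
        · show γ ^ 0 * PprodN P (fun i => detPol (pol i)) (m + 1 - 0) 0
            (fun x' a' => ((1 - α) * α ^ (m + 1 - 0)) * r x' a'
              + (1 - α) * (εf (m + 2 - 0) x' a' - (1 - α) * Ef (m + 1 - 0) x' a')) x a = _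
          norm_num [PprodN]
        · refine Finset.sum_congr rfl fun j hj => ?_
          have e1 : m + 1 - (j + 1) = m - j := by omega
          have e2 : m + 2 - (j + 1) = m + 1 - j := by omega
          rw [e1, e2]
      rw [hresum]
      linarith [hmono, heq.le]

  -- Bellman-residual expansion at the scaled iterate
  have hDpi : ∀ (po : S → A → ℝ) (x : S) (a : A),
      bellmanOp P r γ po (fun x' a' => (1 - α) * sq (n + 1) x' a') x a - (1 - α) * sq (n + 1) x a
      = α ^ (n + 1) * r x a - (1 - α) * Ef (n + 1) x a
        + γ * mdpP P (fun z => polAct po (fun x' a' => (1 - α) * sq (n + 1) x' a') z - (1 - α) * w n z) x a := by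
    intro po x a
    have h1 := hA n x a
    have h2 : mdpP P (fun z => polAct po (fun x' a' => (1 - α) * sq (n + 1) x' a') z - (1 - α) * w n z) x a
        = mdpP P (polAct po (fun x' a' => (1 - α) * sq (n + 1) x' a')) x a - (1 - α) * mdpP P (w n) x a := by
      rw [mdpP_sub P (polAct po (fun x' a' => (1 - α) * sq (n + 1) x' a')) (fun z => (1 - α) * w n z) x a,
        mdpP_smul P (1 - α) (w n) x a]
    have h3 : (1 - α) * (∑ j ∈ Finset.range (n + 1), α ^ j) = 1 - α ^ (n + 1) := by
      linear_combination -geom_sum_mul α (n + 1)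
    show r x a + γ * mdpP P (polAct po (fun x' a' => (1 - α) * sq (n + 1) x' a')) x a - (1 - α) * sq (n + 1) x a = _
    rw [h1, h2]
    linear_combination (-(r x a)) * h3
  have hcmp : ∀ z, polAct pstar (fun x' a' => (1 - α) * sq (n + 1) x' a') z ≤ (1 - α) * sq (n + 1) z (pol (n + 1) z) :=
    fun z => polAct_le hpstar fun a' => mul_le_mul_of_nonneg_left (hgreedy (n+1) z a') h1α.le
  have hDub : ∀ x a, bellmanOp P r γ pstar (fun x' a' => (1 - α) * sq (n + 1) x' a') x a - (1 - α) * sq (n + 1) x a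
      ≤ (fun x' a' => α ^ (n + 1) * r x' a' + (-(1 - α)) * Ef (n + 1) x' a' + ∑ j ∈ Finset.range (n + 1), γ ^ (j + 1) * PprodN P (fun i => detPol (pol i)) (n + 1 - j) (j + 1) (fun x'' a'' => ((1 - α) * α ^ (n - j)) * r x'' a'' + (1 - α) * (εf (n + 1 - j) x'' a'' - (1 - α) * Ef (n - j) x'' a'')) x' a') x a := by
    intro x a
    rw [hDpi pstar x a]
    have hin : ∀ z, polAct pstar (fun x' a' => (1 - α) * sq (n + 1) x' a') z - (1 - α) * w n z
        ≤ polAct (detPol (pol (n + 1))) (fun x' a' => (1 - α) * sq (n + 1) x' a' - (1 - α) * sq n x' a') z := by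
      intro z
      rw [polAct_detPol]
      have h2 : (1 - α) * sq n z (pol (n + 1) z) ≤ (1 - α) * w n z := by
        rw [hW n z]
        exact mul_le_mul_of_nonneg_left (hgreedy n z _) h1α.le
      have h3 := hcmp z
      linarith
    have hin2 : ∀ z, polAct (detPol (pol (n + 1))) (fun x' a' => (1 - α) * sq (n + 1) x' a' - (1 - α) * sq n x' a') z
        ≤ polAct (detPol (pol (n + 1))) (fun x' a' => ∑ j ∈ Finset.range (n + 1),
            γ ^ j * PprodN P (fun i => detPol (pol i)) (n + 1 - j) j (fun x'' a'' => ((1 - α) * α ^ (n - j)) * r x'' a'' + (1 - α) * (εf (n + 1 - j) x'' a'' - (1 - α) * Ef (n - j) x'' a'')) x' a') z :=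
      fun z => polAct_mono (hπpol (n+1)) (fun a' => hDup n z a')
    have hmono : γ * mdpP P (fun z => polAct pstar (fun x' a' => (1 - α) * sq (n + 1) x' a') z - (1 - α) * w n z) x a
        ≤ γ * mdpP P (fun z => polAct (detPol (pol (n + 1))) (fun x' a' => ∑ j ∈ Finset.range (n + 1),
            γ ^ j * PprodN P (fun i => detPol (pol i)) (n + 1 - j) j (fun x'' a'' => ((1 - α) * α ^ (n - j)) * r x'' a'' + (1 - α) * (εf (n + 1 - j) x'' a'' - (1 - α) * Ef (n - j) x'' a'')) x' a') z) x a :=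
      mul_le_mul_of_nonneg_left (mdpP_mono hP (fun z => le_trans (hin z) (hin2 z)) x a) hγ0
    have hps := hpush (n+1) (n+1) (by omega) (fun j => (fun x'' a'' => ((1 - α) * α ^ (n - j)) * r x'' a'' + (1 - α) * (εf (n + 1 - j) x'' a'' - (1 - α) * Ef (n - j) x'' a''))) x a
    rw [hps] at hmono
    show α ^ (n + 1) * r x a - (1 - α) * Ef (n + 1) x a
        + γ * mdpP P (fun z => polAct pstar (fun x' a' => (1 - α) * sq (n + 1) x' a') z - (1 - α) * w n z) x a ≤ _
    have hgoal : (fun x' a' => α ^ (n + 1) * r x' a' + (-(1 - α)) * Ef (n + 1) x' a' + ∑ j ∈ Finset.range (n + 1), γ ^ (j + 1) * PprodN P (fun i => detPol (pol i)) (n + 1 - j) (j + 1) (fun x'' a'' => ((1 - α) * α ^ (n - j)) * r x'' a'' + (1 - α) * (εf (n + 1 - j) x'' a'' - (1 - α) * Ef (n - j) x'' a'')) x' a') x a = α ^ (n + 1) * r x a + (-(1 - α)) * Ef (n + 1) x a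
        + ∑ j ∈ Finset.range (n + 1), γ ^ (j + 1) * PprodN P (fun i => detPol (pol i)) (n + 1 - j) (j + 1) (fun x'' a'' => ((1 - α) * α ^ (n - j)) * r x'' a'' + (1 - α) * (εf (n + 1 - j) x'' a'' - (1 - α) * Ef (n - j) x'' a'')) x a := rfl
    rw [hgoal]
    linarith
  have hDlb : ∀ x a, (fun x' a' => α ^ (n + 1) * r x' a' + (-(1 - α)) * Ef (n + 1) x' a' + ∑ j ∈ Finset.range (n + 1), γ ^ (j + 1) * PprodN P (fun i => detPol (pol i)) (n - j) (j + 1) (fun x'' a'' => ((1 - α) * α ^ (n - j)) * r x'' a'' + (1 - α) * (εf (n + 1 - j) x'' a'' - (1 - α) * Ef (n - j) x'' a'')) x' a') x a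
      ≤ bellmanOp P r γ (detPol (pol (n + 1))) (fun x' a' => (1 - α) * sq (n + 1) x' a') x a - (1 - α) * sq (n + 1) x a := by
    intro x a
    rw [hDpi (detPol (pol (n + 1))) x a]
    have hin : ∀ z, polAct (detPol (pol n)) (fun x' a' => (1 - α) * sq (n + 1) x' a' - (1 - α) * sq n x' a') z
        ≤ polAct (detPol (pol (n + 1))) (fun x' a' => (1 - α) * sq (n + 1) x' a') z - (1 - α) * w n z := by
      intro z
      rw [polAct_detPol, polAct_detPol]
      have h1 : (1 - α) * sq (n + 1) z (pol n z) ≤ (1 - α) * sq (n + 1) z (pol (n + 1) z) :=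
        mul_le_mul_of_nonneg_left (hgreedy (n+1) z _) h1α.le
      rw [hW n z]
      linarith
    have hin2 : ∀ z, polAct (detPol (pol n)) (fun x' a' => ∑ j ∈ Finset.range (n + 1),
          γ ^ j * PprodN P (fun i => detPol (pol i)) (n - j) j (fun x'' a'' => ((1 - α) * α ^ (n - j)) * r x'' a'' + (1 - α) * (εf (n + 1 - j) x'' a'' - (1 - α) * Ef (n - j) x'' a'')) x' a') z
        ≤ polAct (detPol (pol n)) (fun x' a' => (1 - α) * sq (n + 1) x' a' - (1 - α) * sq n x' a') z :=
      fun z => polAct_mono (hπpol n) (fun a' => hDlo n z a')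
    have hmono : γ * mdpP P (fun z => polAct (detPol (pol n)) (fun x' a' => ∑ j ∈ Finset.range (n + 1),
          γ ^ j * PprodN P (fun i => detPol (pol i)) (n - j) j (fun x'' a'' => ((1 - α) * α ^ (n - j)) * r x'' a'' + (1 - α) * (εf (n + 1 - j) x'' a'' - (1 - α) * Ef (n - j) x'' a'')) x' a') z) x a
        ≤ γ * mdpP P (fun z => polAct (detPol (pol (n + 1))) (fun x' a' => (1 - α) * sq (n + 1) x' a') z - (1 - α) * w n z) x a :=
      mul_le_mul_of_nonneg_left (mdpP_mono hP (fun z => le_trans (hin2 z) (hin z)) x a) hγ0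
    have hps := hpush n (n+1) (by omega) (fun j => (fun x'' a'' => ((1 - α) * α ^ (n - j)) * r x'' a'' + (1 - α) * (εf (n + 1 - j) x'' a'' - (1 - α) * Ef (n - j) x'' a''))) x a
    rw [hps] at hmono
    show (fun x' a' => α ^ (n + 1) * r x' a' + (-(1 - α)) * Ef (n + 1) x' a' + ∑ j ∈ Finset.range (n + 1), γ ^ (j + 1) * PprodN P (fun i => detPol (pol i)) (n - j) (j + 1) (fun x'' a'' => ((1 - α) * α ^ (n - j)) * r x'' a'' + (1 - α) * (εf (n + 1 - j) x'' a'' - (1 - α) * Ef (n - j) x'' a'')) x' a') x a ≤ α ^ (n + 1) * r x a - (1 - α) * Ef (n + 1) x a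
        + γ * mdpP P (fun z => polAct (detPol (pol (n + 1))) (fun x' a' => (1 - α) * sq (n + 1) x' a') z - (1 - α) * w n z) x a
    have hgoal : (fun x' a' => α ^ (n + 1) * r x' a' + (-(1 - α)) * Ef (n + 1) x' a' + ∑ j ∈ Finset.range (n + 1), γ ^ (j + 1) * PprodN P (fun i => detPol (pol i)) (n - j) (j + 1) (fun x'' a'' => ((1 - α) * α ^ (n - j)) * r x'' a'' + (1 - α) * (εf (n + 1 - j) x'' a'' - (1 - α) * Ef (n - j) x'' a'')) x' a') x a = α ^ (n + 1) * r x a + (-(1 - α)) * Ef (n + 1) x a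
        + ∑ j ∈ Finset.range (n + 1), γ ^ (j + 1) * PprodN P (fun i => detPol (pol i)) (n - j) (j + 1) (fun x'' a'' => ((1 - α) * α ^ (n - j)) * r x'' a'' + (1 - α) * (εf (n + 1 - j) x'' a'' - (1 - α) * Ef (n - j) x'' a'')) x a := rfl
    rw [hgoal]
    linarith
  -- value-difference identities
  have hid1 : polAct pstar (Qpol pstar) x0 - polAct pstar (fun x' a' => (1 - α) * sq (n + 1) x' a') x0
      = Npol P γ pstar (fun z => polAct pstar (fun x' a' => bellmanOp P r γ pstar (fun x' a' => (1 - α) * sq (n + 1) x' a') x' a' - (1 - α) * sq (n + 1) x' a') z) x0 :=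
    Npol_bellman hP r hγ0 hγ1 hpstar (Qpol pstar) (hQ pstar hpstar) (fun x' a' => (1 - α) * sq (n + 1) x' a') x0
  have hid2 : polAct (detPol (pol (n + 1))) (Qpol (detPol (pol (n + 1)))) x0 - polAct (detPol (pol (n + 1))) (fun x' a' => (1 - α) * sq (n + 1) x' a') x0
      = Npol P γ (detPol (pol (n + 1))) (fun z => polAct (detPol (pol (n + 1))) (fun x' a' => bellmanOp P r γ (detPol (pol (n + 1))) (fun x' a' => (1 - α) * sq (n + 1) x' a') x' a' - (1 - α) * sq (n + 1) x' a') z) x0 :=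
    Npol_bellman hP r hγ0 hγ1 (hπpol (n+1)) (Qpol (detPol (pol (n + 1)))) (hQ (detPol (pol (n + 1))) (hπpol (n+1))) (fun x' a' => (1 - α) * sq (n + 1) x' a') x0
  have hstep1 : polAct pstar (Qpol pstar) x0 - polAct (detPol (pol (n + 1))) (Qpol (detPol (pol (n + 1)))) x0
      ≤ Npol P γ pstar (fun z => polAct pstar (fun x' a' => bellmanOp P r γ pstar (fun x' a' => (1 - α) * sq (n + 1) x' a') x' a' - (1 - α) * sq (n + 1) x' a') z) x0
        - Npol P γ (detPol (pol (n + 1))) (fun z => polAct (detPol (pol (n + 1))) (fun x' a' => bellmanOp P r γ (detPol (pol (n + 1))) (fun x' a' => (1 - α) * sq (n + 1) x' a') x' a' - (1 - α) * sq (n + 1) x' a') z) x0 := by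
    have h3 : polAct pstar (fun x' a' => (1 - α) * sq (n + 1) x' a') x0 ≤ polAct (detPol (pol (n + 1))) (fun x' a' => (1 - α) * sq (n + 1) x' a') x0 := by
      rw [polAct_detPol]
      exact hcmp x0
    linarith [hid1, hid2, h3]
  have hN1 : Npol P γ pstar (fun z => polAct pstar (fun x' a' => bellmanOp P r γ pstar (fun x' a' => (1 - α) * sq (n + 1) x' a') x' a' - (1 - α) * sq (n + 1) x' a') z) x0
      ≤ Npol P γ pstar (fun z => polAct pstar (fun x' a' => α ^ (n + 1) * r x' a' + (-(1 - α)) * Ef (n + 1) x' a' + ∑ j ∈ Finset.range (n + 1), γ ^ (j + 1) * PprodN P (fun i => detPol (pol i)) (n + 1 - j) (j + 1) (fun x'' a'' => ((1 - α) * α ^ (n - j)) * r x'' a'' + (1 - α) * (εf (n + 1 - j) x'' a'' - (1 - α) * Ef (n - j) x'' a'')) x' a') z) x0 :=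
    Npol_mono hP hγ0 hγ1 hpstar (fun z => polAct_mono hpstar (fun a' => hDub z a')) x0
  have hN2 : Npol P γ (detPol (pol (n + 1))) (fun z => polAct (detPol (pol (n + 1))) (fun x' a' => α ^ (n + 1) * r x' a' + (-(1 - α)) * Ef (n + 1) x' a' + ∑ j ∈ Finset.range (n + 1), γ ^ (j + 1) * PprodN P (fun i => detPol (pol i)) (n - j) (j + 1) (fun x'' a'' => ((1 - α) * α ^ (n - j)) * r x'' a'' + (1 - α) * (εf (n + 1 - j) x'' a'' - (1 - α) * Ef (n - j) x'' a'')) x' a') z) x0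
      ≤ Npol P γ (detPol (pol (n + 1))) (fun z => polAct (detPol (pol (n + 1))) (fun x' a' => bellmanOp P r γ (detPol (pol (n + 1))) (fun x' a' => (1 - α) * sq (n + 1) x' a') x' a' - (1 - α) * sq (n + 1) x' a') z) x0 :=
    Npol_mono hP hγ0 hγ1 (hπpol (n+1)) (fun z => polAct_mono (hπpol (n+1)) (fun a' => hDlb z a')) x0

  have hsum_U : ∀ x a, ∑ j ∈ Finset.range (n + 1), γ ^ (j + 1) * PprodN P (fun i => detPol (pol i)) (n + 1 - j) (j + 1) (fun x'' a'' => ((1 - α) * α ^ (n - j)) * r x'' a'' + (1 - α) * (εf (n + 1 - j) x'' a'' - (1 - α) * Ef (n - j) x'' a'')) x a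
      = (∑ j ∈ Finset.range (n + 1), γ ^ (j + 1) * (((1 - α) * α ^ (n - j)) * PprodN P (fun i => detPol (pol i)) (n + 1 - j) (j + 1) r x a))
        + ∑ j ∈ Finset.range (n + 1), γ ^ (j + 1) * ((1 - α) * PprodN P (fun i => detPol (pol i)) (n + 1 - j) (j + 1) (fun x'' a'' => εf (n + 1 - j) x'' a'' - (1 - α) * Ef (n - j) x'' a'') x a) := by
    intro x a
    rw [← Finset.sum_add_distrib]
    refine Finset.sum_congr rfl fun j hj => ?_
    have h := congrFun (congrFun (PprodN_comb P (fun i => detPol (pol i)) (n + 1 - j)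
      ((1 - α) * α ^ (n - j)) (1 - α) r (fun x' a' => εf (n + 1 - j) x' a' - (1 - α) * Ef (n - j) x' a') (j + 1)) x) a
    rw [h]
    ring
  have hpt_U : (fun x' a' => α ^ (n + 1) * r x' a' + (-(1 - α)) * Ef (n + 1) x' a' + ∑ j ∈ Finset.range (n + 1), γ ^ (j + 1) * PprodN P (fun i => detPol (pol i)) (n + 1 - j) (j + 1) (fun x'' a'' => ((1 - α) * α ^ (n - j)) * r x'' a'' + (1 - α) * (εf (n + 1 - j) x'' a'' - (1 - α) * Ef (n - j) x'' a'')) x' a') = fun x' a' => (fun x' a' => α ^ (n + 1) * r x' a' + ∑ j ∈ Finset.range (n + 1), γ ^ (j + 1) * (((1 - α) * α ^ (n - j)) * PprodN P (fun i => detPol (pol i)) (n + 1 - j) (j + 1) r x' a')) x' a' + (fun x' a' => (-(1 - α)) * Ef (n + 1) x' a' + ∑ j ∈ Finset.range (n + 1), γ ^ (j + 1) * ((1 - α) * PprodN P (fun i => detPol (pol i)) (n + 1 - j) (j + 1) (fun x'' a'' => εf (n + 1 - j) x'' a'' - (1 - α) * Ef (n - j) x'' a'') x' a')) x' a' := by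
    funext x a
    rw [hsum_U x a]
    ring
  have hfe_U : (fun z => polAct pstar (fun x' a' => α ^ (n + 1) * r x' a' + (-(1 - α)) * Ef (n + 1) x' a' + ∑ j ∈ Finset.range (n + 1), γ ^ (j + 1) * PprodN P (fun i => detPol (pol i)) (n + 1 - j) (j + 1) (fun x'' a'' => ((1 - α) * α ^ (n - j)) * r x'' a'' + (1 - α) * (εf (n + 1 - j) x'' a'' - (1 - α) * Ef (n - j) x'' a'')) x' a') z)
      = fun z => polAct pstar (fun x' a' => α ^ (n + 1) * r x' a' + ∑ j ∈ Finset.range (n + 1), γ ^ (j + 1) * (((1 - α) * α ^ (n - j)) * PprodN P (fun i => detPol (pol i)) (n + 1 - j) (j + 1) r x' a')) z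
          + ((-(1 - α)) * polAct pstar (Ef (n + 1)) z
            + ∑ j ∈ Finset.range (n + 1), γ ^ (j + 1) *
                ((1 - α) * polAct pstar (PprodN P (fun i => detPol (pol i)) (n + 1 - j) (j + 1) (fun x' a' => εf (n + 1 - j) x' a' - (1 - α) * Ef (n - j) x' a')) z)) := by
    funext z
    rw [hpt_U, polAct_add pstar (fun x' a' => α ^ (n + 1) * r x' a' + ∑ j ∈ Finset.range (n + 1), γ ^ (j + 1) * (((1 - α) * α ^ (n - j)) * PprodN P (fun i => detPol (pol i)) (n + 1 - j) (j + 1) r x' a')) (fun x' a' => (-(1 - α)) * Ef (n + 1) x' a' + ∑ j ∈ Finset.range (n + 1), γ ^ (j + 1) * ((1 - α) * PprodN P (fun i => detPol (pol i)) (n + 1 - j) (j + 1) (fun x'' a'' => εf (n + 1 - j) x'' a'' - (1 - α) * Ef (n - j) x'' a'') x' a')) z]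
    congr 1
    rw [polAct_add pstar (fun x' a' => (-(1 - α)) * Ef (n + 1) x' a')
        (fun x' a' => ∑ j ∈ Finset.range (n + 1), γ ^ (j + 1) * ((1 - α) * PprodN P (fun i => detPol (pol i)) (n + 1 - j) (j + 1) (fun x'' a'' => εf (n + 1 - j) x'' a'' - (1 - α) * Ef (n - j) x'' a'') x' a')) z,
      polAct_smul pstar (-(1 - α)) (Ef (n + 1)) z,
      polAct_sum pstar (Finset.range (n + 1))
        (fun j => fun x' a' => γ ^ (j + 1) * ((1 - α) * PprodN P (fun i => detPol (pol i)) (n + 1 - j) (j + 1) (fun x'' a'' => εf (n + 1 - j) x'' a'' - (1 - α) * Ef (n - j) x'' a'') x' a')) z]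
    congr 1
    refine Finset.sum_congr rfl fun j hj => ?_
    rw [polAct_smul pstar (γ ^ (j + 1)) (fun x' a' => (1 - α) * PprodN P (fun i => detPol (pol i)) (n + 1 - j) (j + 1) (fun x'' a'' => εf (n + 1 - j) x'' a'' - (1 - α) * Ef (n - j) x'' a'') x' a') z,
      polAct_smul pstar (1 - α) (PprodN P (fun i => detPol (pol i)) (n + 1 - j) (j + 1) (fun x' a' => εf (n + 1 - j) x' a' - (1 - α) * Ef (n - j) x' a')) z]
  have hsplitU : Npol P γ pstar (fun z => polAct pstar (fun x' a' => α ^ (n + 1) * r x' a' + (-(1 - α)) * Ef (n + 1) x' a' + ∑ j ∈ Finset.range (n + 1), γ ^ (j + 1) * PprodN P (fun i => detPol (pol i)) (n + 1 - j) (j + 1) (fun x'' a'' => ((1 - α) * α ^ (n - j)) * r x'' a'' + (1 - α) * (εf (n + 1 - j) x'' a'' - (1 - α) * Ef (n - j) x'' a'')) x' a') z) x0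
      = Npol P γ pstar (fun z => polAct pstar (fun x' a' => α ^ (n + 1) * r x' a' + ∑ j ∈ Finset.range (n + 1), γ ^ (j + 1) * (((1 - α) * α ^ (n - j)) * PprodN P (fun i => detPol (pol i)) (n + 1 - j) (j + 1) r x' a')) z) x0
        + ((-(1 - α)) * Npol P γ pstar (polAct pstar (Ef (n + 1))) x0
          + ∑ j ∈ Finset.range (n + 1), γ ^ (j + 1) *
              ((1 - α) * Npol P γ pstar (polAct pstar (PprodN P (fun i => detPol (pol i)) (n + 1 - j) (j + 1) (fun x' a' => εf (n + 1 - j) x' a' - (1 - α) * Ef (n - j) x' a'))) x0)) := by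
    rw [hfe_U]
    rw [Npol_add hP hγ0 hγ1 hpstar (fun z => polAct pstar (fun x' a' => α ^ (n + 1) * r x' a' + ∑ j ∈ Finset.range (n + 1), γ ^ (j + 1) * (((1 - α) * α ^ (n - j)) * PprodN P (fun i => detPol (pol i)) (n + 1 - j) (j + 1) r x' a')) z)
      (fun z => (-(1 - α)) * polAct pstar (Ef (n + 1)) z
        + ∑ j ∈ Finset.range (n + 1), γ ^ (j + 1) *
            ((1 - α) * polAct pstar (PprodN P (fun i => detPol (pol i)) (n + 1 - j) (j + 1) (fun x' a' => εf (n + 1 - j) x' a' - (1 - α) * Ef (n - j) x' a')) z)) x0]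
    congr 1
    rw [Npol_add hP hγ0 hγ1 hpstar (fun z => (-(1 - α)) * polAct pstar (Ef (n + 1)) z)
      (fun z => ∑ j ∈ Finset.range (n + 1), γ ^ (j + 1) *
          ((1 - α) * polAct pstar (PprodN P (fun i => detPol (pol i)) (n + 1 - j) (j + 1) (fun x' a' => εf (n + 1 - j) x' a' - (1 - α) * Ef (n - j) x' a')) z)) x0,
      Npol_smul hP hγ0 hγ1 hpstar (-(1 - α)) (polAct pstar (Ef (n + 1))) x0,
      Npol_sum hP hγ0 hγ1 hpstar (Finset.range (n + 1))
        (fun j => fun z => γ ^ (j + 1) * ((1 - α) * polAct pstar (PprodN P (fun i => detPol (pol i)) (n + 1 - j) (j + 1) (fun x' a' => εf (n + 1 - j) x' a' - (1 - α) * Ef (n - j) x' a')) z)) x0]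
    congr 1
    refine Finset.sum_congr rfl fun j hj => ?_
    rw [Npol_smul hP hγ0 hγ1 hpstar (γ ^ (j + 1))
        (fun z => (1 - α) * polAct pstar (PprodN P (fun i => detPol (pol i)) (n + 1 - j) (j + 1) (fun x' a' => εf (n + 1 - j) x' a' - (1 - α) * Ef (n - j) x' a')) z) x0,
      Npol_smul hP hγ0 hγ1 hpstar (1 - α) (polAct pstar (PprodN P (fun i => detPol (pol i)) (n + 1 - j) (j + 1) (fun x' a' => εf (n + 1 - j) x' a' - (1 - α) * Ef (n - j) x' a'))) x0]


  have hsum_L : ∀ x a, ∑ j ∈ Finset.range (n + 1), γ ^ (j + 1) * PprodN P (fun i => detPol (pol i)) (n - j) (j + 1) (fun x'' a'' => ((1 - α) * α ^ (n - j)) * r x'' a'' + (1 - α) * (εf (n + 1 - j) x'' a'' - (1 - α) * Ef (n - j) x'' a'')) x a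
      = (∑ j ∈ Finset.range (n + 1), γ ^ (j + 1) * (((1 - α) * α ^ (n - j)) * PprodN P (fun i => detPol (pol i)) (n - j) (j + 1) r x a))
        + ∑ j ∈ Finset.range (n + 1), γ ^ (j + 1) * ((1 - α) * PprodN P (fun i => detPol (pol i)) (n - j) (j + 1) (fun x'' a'' => εf (n + 1 - j) x'' a'' - (1 - α) * Ef (n - j) x'' a'') x a) := by
    intro x a
    rw [← Finset.sum_add_distrib]
    refine Finset.sum_congr rfl fun j hj => ?_
    have h := congrFun (congrFun (PprodN_comb P (fun i => detPol (pol i)) (n - j)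
      ((1 - α) * α ^ (n - j)) (1 - α) r (fun x' a' => εf (n + 1 - j) x' a' - (1 - α) * Ef (n - j) x' a') (j + 1)) x) a
    rw [h]
    ring
  have hpt_L : (fun x' a' => α ^ (n + 1) * r x' a' + (-(1 - α)) * Ef (n + 1) x' a' + ∑ j ∈ Finset.range (n + 1), γ ^ (j + 1) * PprodN P (fun i => detPol (pol i)) (n - j) (j + 1) (fun x'' a'' => ((1 - α) * α ^ (n - j)) * r x'' a'' + (1 - α) * (εf (n + 1 - j) x'' a'' - (1 - α) * Ef (n - j) x'' a'')) x' a') = fun x' a' => (fun x' a' => α ^ (n + 1) * r x' a' + ∑ j ∈ Finset.range (n + 1), γ ^ (j + 1) * (((1 - α) * α ^ (n - j)) * PprodN P (fun i => detPol (pol i)) (n - j) (j + 1) r x' a')) x' a' + (fun x' a' => (-(1 - α)) * Ef (n + 1) x' a' + ∑ j ∈ Finset.range (n + 1), γ ^ (j + 1) * ((1 - α) * PprodN P (fun i => detPol (pol i)) (n - j) (j + 1) (fun x'' a'' => εf (n + 1 - j) x'' a'' - (1 - α) * Ef (n - j) x'' a'') x' a')) x' a' := by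
    funext x a
    rw [hsum_L x a]
    ring
  have hfe_L : (fun z => polAct (detPol (pol (n + 1))) (fun x' a' => α ^ (n + 1) * r x' a' + (-(1 - α)) * Ef (n + 1) x' a' + ∑ j ∈ Finset.range (n + 1), γ ^ (j + 1) * PprodN P (fun i => detPol (pol i)) (n - j) (j + 1) (fun x'' a'' => ((1 - α) * α ^ (n - j)) * r x'' a'' + (1 - α) * (εf (n + 1 - j) x'' a'' - (1 - α) * Ef (n - j) x'' a'')) x' a') z)
      = fun z => polAct (detPol (pol (n + 1))) (fun x' a' => α ^ (n + 1) * r x' a' + ∑ j ∈ Finset.range (n + 1), γ ^ (j + 1) * (((1 - α) * α ^ (n - j)) * PprodN P (fun i => detPol (pol i)) (n - j) (j + 1) r x' a')) z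
          + ((-(1 - α)) * polAct (detPol (pol (n + 1))) (Ef (n + 1)) z
            + ∑ j ∈ Finset.range (n + 1), γ ^ (j + 1) *
                ((1 - α) * polAct (detPol (pol (n + 1))) (PprodN P (fun i => detPol (pol i)) (n - j) (j + 1) (fun x' a' => εf (n + 1 - j) x' a' - (1 - α) * Ef (n - j) x' a')) z)) := by
    funext z
    rw [hpt_L, polAct_add (detPol (pol (n + 1))) (fun x' a' => α ^ (n + 1) * r x' a' + ∑ j ∈ Finset.range (n + 1), γ ^ (j + 1) * (((1 - α) * α ^ (n - j)) * PprodN P (fun i => detPol (pol i)) (n - j) (j + 1) r x' a')) (fun x' a' => (-(1 - α)) * Ef (n + 1) x' a' + ∑ j ∈ Finset.range (n + 1), γ ^ (j + 1) * ((1 - α) * PprodN P (fun i => detPol (pol i)) (n - j) (j + 1) (fun x'' a'' => εf (n + 1 - j) x'' a'' - (1 - α) * Ef (n - j) x'' a'') x' a')) z]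
    congr 1
    rw [polAct_add (detPol (pol (n + 1))) (fun x' a' => (-(1 - α)) * Ef (n + 1) x' a')
        (fun x' a' => ∑ j ∈ Finset.range (n + 1), γ ^ (j + 1) * ((1 - α) * PprodN P (fun i => detPol (pol i)) (n - j) (j + 1) (fun x'' a'' => εf (n + 1 - j) x'' a'' - (1 - α) * Ef (n - j) x'' a'') x' a')) z,
      polAct_smul (detPol (pol (n + 1))) (-(1 - α)) (Ef (n + 1)) z,
      polAct_sum (detPol (pol (n + 1))) (Finset.range (n + 1))
        (fun j => fun x' a' => γ ^ (j + 1) * ((1 - α) * PprodN P (fun i => detPol (pol i)) (n - j) (j + 1) (fun x'' a'' => εf (n + 1 - j) x'' a'' - (1 - α) * Ef (n - j) x'' a'') x' a')) z]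
    congr 1
    refine Finset.sum_congr rfl fun j hj => ?_
    rw [polAct_smul (detPol (pol (n + 1))) (γ ^ (j + 1)) (fun x' a' => (1 - α) * PprodN P (fun i => detPol (pol i)) (n - j) (j + 1) (fun x'' a'' => εf (n + 1 - j) x'' a'' - (1 - α) * Ef (n - j) x'' a'') x' a') z,
      polAct_smul (detPol (pol (n + 1))) (1 - α) (PprodN P (fun i => detPol (pol i)) (n - j) (j + 1) (fun x' a' => εf (n + 1 - j) x' a' - (1 - α) * Ef (n - j) x' a')) z]
  have hsplitL : Npol P γ (detPol (pol (n + 1))) (fun z => polAct (detPol (pol (n + 1))) (fun x' a' => α ^ (n + 1) * r x' a' + (-(1 - α)) * Ef (n + 1) x' a' + ∑ j ∈ Finset.range (n + 1), γ ^ (j + 1) * PprodN P (fun i => detPol (pol i)) (n - j) (j + 1) (fun x'' a'' => ((1 - α) * α ^ (n - j)) * r x'' a'' + (1 - α) * (εf (n + 1 - j) x'' a'' - (1 - α) * Ef (n - j) x'' a'')) x' a') z) x0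
      = Npol P γ (detPol (pol (n + 1))) (fun z => polAct (detPol (pol (n + 1))) (fun x' a' => α ^ (n + 1) * r x' a' + ∑ j ∈ Finset.range (n + 1), γ ^ (j + 1) * (((1 - α) * α ^ (n - j)) * PprodN P (fun i => detPol (pol i)) (n - j) (j + 1) r x' a')) z) x0
        + ((-(1 - α)) * Npol P γ (detPol (pol (n + 1))) (polAct (detPol (pol (n + 1))) (Ef (n + 1))) x0
          + ∑ j ∈ Finset.range (n + 1), γ ^ (j + 1) *
              ((1 - α) * Npol P γ (detPol (pol (n + 1))) (polAct (detPol (pol (n + 1))) (PprodN P (fun i => detPol (pol i)) (n - j) (j + 1) (fun x' a' => εf (n + 1 - j) x' a' - (1 - α) * Ef (n - j) x' a'))) x0)) := by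
    rw [hfe_L]
    rw [Npol_add hP hγ0 hγ1 (hπpol (n+1)) (fun z => polAct (detPol (pol (n + 1))) (fun x' a' => α ^ (n + 1) * r x' a' + ∑ j ∈ Finset.range (n + 1), γ ^ (j + 1) * (((1 - α) * α ^ (n - j)) * PprodN P (fun i => detPol (pol i)) (n - j) (j + 1) r x' a')) z)
      (fun z => (-(1 - α)) * polAct (detPol (pol (n + 1))) (Ef (n + 1)) z
        + ∑ j ∈ Finset.range (n + 1), γ ^ (j + 1) *
            ((1 - α) * polAct (detPol (pol (n + 1))) (PprodN P (fun i => detPol (pol i)) (n - j) (j + 1) (fun x' a' => εf (n + 1 - j) x' a' - (1 - α) * Ef (n - j) x' a')) z)) x0]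
    congr 1
    rw [Npol_add hP hγ0 hγ1 (hπpol (n+1)) (fun z => (-(1 - α)) * polAct (detPol (pol (n + 1))) (Ef (n + 1)) z)
      (fun z => ∑ j ∈ Finset.range (n + 1), γ ^ (j + 1) *
          ((1 - α) * polAct (detPol (pol (n + 1))) (PprodN P (fun i => detPol (pol i)) (n - j) (j + 1) (fun x' a' => εf (n + 1 - j) x' a' - (1 - α) * Ef (n - j) x' a')) z)) x0,
      Npol_smul hP hγ0 hγ1 (hπpol (n+1)) (-(1 - α)) (polAct (detPol (pol (n + 1))) (Ef (n + 1))) x0,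
      Npol_sum hP hγ0 hγ1 (hπpol (n+1)) (Finset.range (n + 1))
        (fun j => fun z => γ ^ (j + 1) * ((1 - α) * polAct (detPol (pol (n + 1))) (PprodN P (fun i => detPol (pol i)) (n - j) (j + 1) (fun x' a' => εf (n + 1 - j) x' a' - (1 - α) * Ef (n - j) x' a')) z)) x0]
    congr 1
    refine Finset.sum_congr rfl fun j hj => ?_
    rw [Npol_smul hP hγ0 hγ1 (hπpol (n+1)) (γ ^ (j + 1))
        (fun z => (1 - α) * polAct (detPol (pol (n + 1))) (PprodN P (fun i => detPol (pol i)) (n - j) (j + 1) (fun x' a' => εf (n + 1 - j) x' a' - (1 - α) * Ef (n - j) x' a')) z) x0,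
      Npol_smul hP hγ0 hγ1 (hπpol (n+1)) (1 - α) (polAct (detPol (pol (n + 1))) (PprodN P (fun i => detPol (pol i)) (n - j) (j + 1) (fun x' a' => εf (n + 1 - j) x' a' - (1 - α) * Ef (n - j) x' a'))) x0]

  -- bound on the reward part
  have hRBu_b : ∀ x a, |(fun x' a' => α ^ (n + 1) * r x' a' + ∑ j ∈ Finset.range (n + 1), γ ^ (j + 1) * (((1 - α) * α ^ (n - j)) * PprodN P (fun i => detPol (pol i)) (n + 1 - j) (j + 1) r x' a')) x a| ≤ (α ^ (n + 1) + ∑ j ∈ Finset.range (n + 1), γ ^ (j + 1) * ((1 - α) * α ^ (n - j))) := by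
    intro x a
    have h1 : |α ^ (n + 1) * r x a| ≤ α ^ (n + 1) := by
      rw [abs_mul, abs_of_nonneg (pow_nonneg hα0 _)]
      nlinarith [hr x a, pow_nonneg hα0 (n + 1), abs_nonneg (r x a)]
    have h2 : |∑ j ∈ Finset.range (n + 1), γ ^ (j + 1) * (((1 - α) * α ^ (n - j)) * PprodN P (fun i => detPol (pol i)) (n + 1 - j) (j + 1) r x a)|
        ≤ ∑ j ∈ Finset.range (n + 1), γ ^ (j + 1) * ((1 - α) * α ^ (n - j)) := by
      refine (Finset.abs_sum_le_sum_abs _ _).trans (Finset.sum_le_sum fun j hj => ?_)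
      have h3 := PprodN_abs_le hP hπpol hr (n + 1 - j) (j + 1) x a
      rw [abs_mul, abs_mul, abs_of_nonneg (pow_nonneg hγ0 _),
        abs_of_nonneg (mul_nonneg h1α.le (pow_nonneg hα0 _))]
      have h4 : (0:ℝ) ≤ γ ^ (j + 1) := pow_nonneg hγ0 _
      have h5 : (0:ℝ) ≤ (1 - α) * α ^ (n - j) := mul_nonneg h1α.le (pow_nonneg hα0 _)
      exact mul_le_mul_of_nonneg_left (by simpa using mul_le_mul_of_nonneg_left h3 h5) h4
    calc |(fun x' a' => α ^ (n + 1) * r x' a' + ∑ j ∈ Finset.range (n + 1), γ ^ (j + 1) * (((1 - α) * α ^ (n - j)) * PprodN P (fun i => detPol (pol i)) (n + 1 - j) (j + 1) r x' a')) x a| ≤ |α ^ (n + 1) * r x a|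
          + |∑ j ∈ Finset.range (n + 1), γ ^ (j + 1) * (((1 - α) * α ^ (n - j)) * PprodN P (fun i => detPol (pol i)) (n + 1 - j) (j + 1) r x a)| :=
        abs_add_le _ _
      _ ≤ (α ^ (n + 1) + ∑ j ∈ Finset.range (n + 1), γ ^ (j + 1) * ((1 - α) * α ^ (n - j))) := by linarith
  have hRBl_b : ∀ x a, |(fun x' a' => α ^ (n + 1) * r x' a' + ∑ j ∈ Finset.range (n + 1), γ ^ (j + 1) * (((1 - α) * α ^ (n - j)) * PprodN P (fun i => detPol (pol i)) (n - j) (j + 1) r x' a')) x a| ≤ (α ^ (n + 1) + ∑ j ∈ Finset.range (n + 1), γ ^ (j + 1) * ((1 - α) * α ^ (n - j))) := by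
    intro x a
    have h1 : |α ^ (n + 1) * r x a| ≤ α ^ (n + 1) := by
      rw [abs_mul, abs_of_nonneg (pow_nonneg hα0 _)]
      nlinarith [hr x a, pow_nonneg hα0 (n + 1), abs_nonneg (r x a)]
    have h2 : |∑ j ∈ Finset.range (n + 1), γ ^ (j + 1) * (((1 - α) * α ^ (n - j)) * PprodN P (fun i => detPol (pol i)) (n - j) (j + 1) r x a)|
        ≤ ∑ j ∈ Finset.range (n + 1), γ ^ (j + 1) * ((1 - α) * α ^ (n - j)) := by
      refine (Finset.abs_sum_le_sum_abs _ _).trans (Finset.sum_le_sum fun j hj => ?_)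
      have h3 := PprodN_abs_le hP hπpol hr (n - j) (j + 1) x a
      rw [abs_mul, abs_mul, abs_of_nonneg (pow_nonneg hγ0 _),
        abs_of_nonneg (mul_nonneg h1α.le (pow_nonneg hα0 _))]
      have h4 : (0:ℝ) ≤ γ ^ (j + 1) := pow_nonneg hγ0 _
      have h5 : (0:ℝ) ≤ (1 - α) * α ^ (n - j) := mul_nonneg h1α.le (pow_nonneg hα0 _)
      exact mul_le_mul_of_nonneg_left (by simpa using mul_le_mul_of_nonneg_left h3 h5) h4
    calc |(fun x' a' => α ^ (n + 1) * r x' a' + ∑ j ∈ Finset.range (n + 1), γ ^ (j + 1) * (((1 - α) * α ^ (n - j)) * PprodN P (fun i => detPol (pol i)) (n - j) (j + 1) r x' a')) x a| ≤ |α ^ (n + 1) * r x a|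
          + |∑ j ∈ Finset.range (n + 1), γ ^ (j + 1) * (((1 - α) * α ^ (n - j)) * PprodN P (fun i => detPol (pol i)) (n - j) (j + 1) r x a)| :=
        abs_add_le _ _
      _ ≤ (α ^ (n + 1) + ∑ j ∈ Finset.range (n + 1), γ ^ (j + 1) * ((1 - α) * α ^ (n - j))) := by linarith
  have hNRBu := Npol_abs_le hP hγ0 hγ1 hpstar
    (fun z => polAct_abs_le (q := (fun x' a' => α ^ (n + 1) * r x' a' + ∑ j ∈ Finset.range (n + 1), γ ^ (j + 1) * (((1 - α) * α ^ (n - j)) * PprodN P (fun i => detPol (pol i)) (n + 1 - j) (j + 1) r x' a'))) (x := z) (c := (α ^ (n + 1) + ∑ j ∈ Finset.range (n + 1), γ ^ (j + 1) * ((1 - α) * α ^ (n - j)))) hpstar (fun a' => hRBu_b z a')) x0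
  have hNRBl := Npol_abs_le hP hγ0 hγ1 (hπpol (n+1))
    (fun z => polAct_abs_le (q := (fun x' a' => α ^ (n + 1) * r x' a' + ∑ j ∈ Finset.range (n + 1), γ ^ (j + 1) * (((1 - α) * α ^ (n - j)) * PprodN P (fun i => detPol (pol i)) (n - j) (j + 1) r x' a'))) (x := z) (c := (α ^ (n + 1) + ∑ j ∈ Finset.range (n + 1), γ ^ (j + 1) * ((1 - α) * α ^ (n - j)))) (hπpol (n+1)) (fun a' => hRBl_b z a')) x0
  have hcH : (α ^ (n + 1) + ∑ j ∈ Finset.range (n + 1), γ ^ (j + 1) * ((1 - α) * α ^ (n - j))) / (1 - γ) = H * (α ^ (n + 1) + ∑ j ∈ Finset.range (n + 1), γ ^ (j + 1) * ((1 - α) * α ^ (n - j))) := by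
    rw [hH]; field_simp; ring
  -- rewrite the target right-hand side
  have hT1 : (∑ j ∈ Finset.range (n + 1), γ ^ (n + 1 - j) * α ^ j) / ((1:ℝ) / (1 - α))
      = ∑ j ∈ Finset.range (n + 1), γ ^ (j + 1) * ((1 - α) * α ^ (n - j)) := by
    rw [div_div_eq_mul_div, div_one]
    rw [← Finset.sum_range_reflect (fun j => γ ^ (n + 1 - j) * α ^ j) (n + 1)]
    rw [Finset.sum_mul]
    refine Finset.sum_congr rfl fun j hj => ?_
    have hj' := Finset.mem_range.mp hj
    rw [show n + 1 - (n + 1 - 1 - j) = j + 1 by omega, show n + 1 - 1 - j = n - j by omega]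
    ring
  have hT2 : (1:ℝ) / ((1:ℝ) / (1 - α)) = 1 - α := one_div_one_div _
  have hT3 : ∑ j ∈ Finset.Icc 1 (n + 1), γ ^ j *
        (Npol P γ pstar (polAct pstar
            (PprodN P (fun i => detPol (pol i)) (n + 1 + 1 - j) j
              (fun x' a' => εf (n + 1 + 1 - j) x' a' - (1 - α) * Ef (n + 1 - j) x' a'))) x0
          - Npol P γ (detPol (pol (n + 1))) (polAct (detPol (pol (n + 1)))
            (PprodN P (fun i => detPol (pol i)) (n + 1 - j) j
              (fun x' a' => εf (n + 1 + 1 - j) x' a' - (1 - α) * Ef (n + 1 - j) x' a'))) x0)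
      = ∑ j ∈ Finset.range (n + 1), γ ^ (j + 1) * (Npol P γ pstar (polAct pstar (PprodN P (fun i => detPol (pol i)) (n + 1 - j) (j + 1) (fun x' a' => εf (n + 1 - j) x' a' - (1 - α) * Ef (n - j) x' a'))) x0 - Npol P γ (detPol (pol (n + 1))) (polAct (detPol (pol (n + 1))) (PprodN P (fun i => detPol (pol i)) (n - j) (j + 1) (fun x' a' => εf (n + 1 - j) x' a' - (1 - α) * Ef (n - j) x' a'))) x0) := by
    rw [sum_Icc_one_eq_sum_range (fun j => γ ^ j *
        (Npol P γ pstar (polAct pstar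
            (PprodN P (fun i => detPol (pol i)) (n + 1 + 1 - j) j
              (fun x' a' => εf (n + 1 + 1 - j) x' a' - (1 - α) * Ef (n + 1 - j) x' a'))) x0
          - Npol P γ (detPol (pol (n + 1))) (polAct (detPol (pol (n + 1)))
            (PprodN P (fun i => detPol (pol i)) (n + 1 - j) j
              (fun x' a' => εf (n + 1 + 1 - j) x' a' - (1 - α) * Ef (n + 1 - j) x' a'))) x0)) (n + 1)]
    refine Finset.sum_congr rfl fun i hi => ?_
    have hi' := Finset.mem_range.mp hi
    simp only [show n + 1 + 1 - (i + 1) = n + 1 - i from by omega,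
      show n + 1 - (i + 1) = n - i from by omega]
  -- sum reshuffling identities
  have hgs : ∑ j ∈ Finset.range (n + 1), γ ^ (j + 1) * ((1 - α) * Npol P γ pstar (polAct pstar (PprodN P (fun i => detPol (pol i)) (n + 1 - j) (j + 1) (fun x' a' => εf (n + 1 - j) x' a' - (1 - α) * Ef (n - j) x' a'))) x0)
      = (1 - α) * ∑ j ∈ Finset.range (n + 1), γ ^ (j + 1) * Npol P γ pstar (polAct pstar (PprodN P (fun i => detPol (pol i)) (n + 1 - j) (j + 1) (fun x' a' => εf (n + 1 - j) x' a' - (1 - α) * Ef (n - j) x' a'))) x0 := by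
    rw [Finset.mul_sum]
    exact Finset.sum_congr rfl fun j _ => by ring
  have hgk : ∑ j ∈ Finset.range (n + 1), γ ^ (j + 1) * ((1 - α) * Npol P γ (detPol (pol (n + 1))) (polAct (detPol (pol (n + 1))) (PprodN P (fun i => detPol (pol i)) (n - j) (j + 1) (fun x' a' => εf (n + 1 - j) x' a' - (1 - α) * Ef (n - j) x' a'))) x0)
      = (1 - α) * ∑ j ∈ Finset.range (n + 1), γ ^ (j + 1) * Npol P γ (detPol (pol (n + 1))) (polAct (detPol (pol (n + 1))) (PprodN P (fun i => detPol (pol i)) (n - j) (j + 1) (fun x' a' => εf (n + 1 - j) x' a' - (1 - α) * Ef (n - j) x' a'))) x0 := by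
    rw [Finset.mul_sum]
    exact Finset.sum_congr rfl fun j _ => by ring
  have hsd : ∑ j ∈ Finset.range (n + 1), γ ^ (j + 1) * (Npol P γ pstar (polAct pstar (PprodN P (fun i => detPol (pol i)) (n + 1 - j) (j + 1) (fun x' a' => εf (n + 1 - j) x' a' - (1 - α) * Ef (n - j) x' a'))) x0 - Npol P γ (detPol (pol (n + 1))) (polAct (detPol (pol (n + 1))) (PprodN P (fun i => detPol (pol i)) (n - j) (j + 1) (fun x' a' => εf (n + 1 - j) x' a' - (1 - α) * Ef (n - j) x' a'))) x0)
      = (∑ j ∈ Finset.range (n + 1), γ ^ (j + 1) * Npol P γ pstar (polAct pstar (PprodN P (fun i => detPol (pol i)) (n + 1 - j) (j + 1) (fun x' a' => εf (n + 1 - j) x' a' - (1 - α) * Ef (n - j) x' a'))) x0)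
        - ∑ j ∈ Finset.range (n + 1), γ ^ (j + 1) * Npol P γ (detPol (pol (n + 1))) (polAct (detPol (pol (n + 1))) (PprodN P (fun i => detPol (pol i)) (n - j) (j + 1) (fun x' a' => εf (n + 1 - j) x' a' - (1 - α) * Ef (n - j) x' a'))) x0 := by
    rw [← Finset.sum_sub_distrib]
    exact Finset.sum_congr rfl fun j _ => by ring
  rw [hT1, hT2, hT3, hsd]
  have habs1 := abs_le.mp hNRBu
  have habs2 := abs_le.mp hNRBl
  rw [hcH] at habs1 habs2
  rw [hgs] at hsplitU
  rw [hgk] at hsplitL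
  nlinarith [hstep1, hN1, hN2, hsplitU, hsplitL, habs1.2, habs2.1]
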